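/- arXiv:0808.2779 — 17 statements merged into one kernel-verified Lean document; each statement's English description precedes it below -/
import Mathlib

section
/- Let (δ, π) be a cloud on a finite set X. Then π and the function x ↦ 1 − δ(x) are possibility distributions on X, and the credal set of the cloud is exactly the intersection of the credal sets of these two possibility distributions: 𝒫[δ,π] = 𝒫_π ∩ 𝒫_{1−δ}. -/
open Finset

attribute [local instance] Classical.propDecidable

variable {X : Type*}

/-- A probability distribution on a finite set `X`. -/
def IsProbDist [Fintype X] (p : X → ℝ) : Prop :=
  (∀ x, 0 ≤ p x ∧ p x ≤ 1) ∧ ∑ x, p x = 1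

/-- A cloud on `X`: a pair `(δ, π)` of `[0,1]`-valued maps with `δ ≤ π`,
`π` reaching `1` and `δ` reaching `0`. -/
def IsCloud (δ π : X → ℝ) : Prop :=
  (∀ x, 0 ≤ δ x) ∧ (∀ x, π x ≤ 1) ∧ (∀ x, δ x ≤ π x) ∧ (∃ x, π x = 1) ∧ (∃ y, δ y = 0)

/-- The credal set of a cloud `(δ, π)`. -/
def credalCloud [Fintype X] (δ π : X → ℝ) : Set (X → ℝ) :=
  {p | IsProbDist p ∧ ∀ α : ℝ, 0 ≤ α → α ≤ 1 →
    (∑ x ∈ univ.filter (fun x => α ≤ δ x), p x) ≤ 1 - α ∧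
    1 - α ≤ ∑ x ∈ univ.filter (fun x => α < π x), p x}

/-- A possibility distribution on `X`. -/
def IsPossDist (π : X → ℝ) : Prop :=
  (∀ x, 0 ≤ π x ∧ π x ≤ 1) ∧ ∃ x, π x = 1

/-- The credal set of a possibility distribution. -/
def credalPoss [Fintype X] (π : X → ℝ) : Set (X → ℝ) :=
  {p | IsProbDist p ∧ ∀ α : ℝ, 0 ≤ α → α ≤ 1 →
    1 - α ≤ ∑ x ∈ univ.filter (fun x => α < π x), p x}

lemma compl_sum_eq [Fintype X] {p : X → ℝ} (hsum : ∑ x, p x = 1) (α : ℝ) (δ : X → ℝ) :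
    ∑ x ∈ univ.filter (fun x => ¬ (α ≤ δ x)), p x
      = 1 - ∑ x ∈ univ.filter (fun x => α ≤ δ x), p x := by
  have := Finset.sum_filter_add_sum_filter_not (univ : Finset X) (fun x => α ≤ δ x) p
  rw [hsum] at this
  linarith

/-- a cloud `(δ, π)` is representable by the pair of possibility
distributions `π` and `1 - δ`, and its credal set is the intersection of their
credal sets. -/
theorem cloud_credal_eq_inter_poss [Fintype X] (δ π : X → ℝ) (h : IsCloud δ π) :
    IsPossDist π ∧ IsPossDist (fun x => 1 - δ x) ∧
      credalCloud δ π = credalPoss π ∩ credalPoss (fun x => 1 - δ x) := by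
  obtain ⟨hδ0, hπ1, hδπ, ⟨x₀, hx₀⟩, ⟨y₀, hy₀⟩⟩ := h
  refine ⟨⟨fun x => ⟨le_trans (hδ0 x) (hδπ x), hπ1 x⟩, ⟨x₀, hx₀⟩⟩,
    ⟨fun x => ⟨show (0:ℝ) ≤ 1 - δ x by have := le_trans (hδπ x) (hπ1 x); linarith, show 1 - δ x ≤ (1:ℝ) by have := hδ0 x; linarith⟩,
     ⟨y₀, by simp [hy₀]⟩⟩, ?_⟩
  ext p
  constructor
  · rintro ⟨hp, hcond⟩
    refine ⟨⟨hp, fun α h0 h1 => (hcond α h0 h1).2⟩, ⟨hp, fun β h0 h1 => ?_⟩⟩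
    have key := (hcond (1 - β) (by linarith) (by linarith)).1
    have hset : (univ.filter (fun x => β < 1 - δ x)) =
        (univ.filter (fun x => ¬ ((1 - β) ≤ δ x))) := by
      apply Finset.filter_congr; intro x _; constructor <;> intro hx <;> simp_all <;> linarith
    rw [hset, compl_sum_eq hp.2]
    linarith
  · rintro ⟨⟨hp, hπcond⟩, ⟨_, hδcond⟩⟩
    refine ⟨hp, fun α h0 h1 => ⟨?_, hπcond α h0 h1⟩⟩
    have key := hδcond (1 - α) (by linarith) (by linarith)
    have hset : (univ.filter (fun x => (1 - α) < 1 - δ x)) =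
        (univ.filter (fun x => ¬ (α ≤ δ x))) := by
      apply Finset.filter_congr; intro x _; constructor <;> intro hx <;> simp_all <;> linarith
    rw [hset, compl_sum_eq hp.2] at key
    linarith
end

section
/- Let (δ, π) be a cloud on a finite set X. Then the mirror pair (1−π, 1−δ), i.e. the pair of functions x ↦ 1 − π(x) (as lower distribution) and x ↦ 1 − δ(x) (as upper distribution), is also a cloud on X, and it induces the same credal set: 𝒫[1−π, 1−δ] = 𝒫[δ,π]. -/
open Finset

attribute [local instance] Classical.propDecidable

variable {X : Type*}

lemma credal_mirror_subset [Fintype X] (f g : X → ℝ) (p : X → ℝ)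
    (hp : p ∈ credalCloud f g) :
    p ∈ credalCloud (fun x => 1 - g x) (fun x => 1 - f x) := by
  obtain ⟨hpd, hm⟩ := hp
  refine ⟨hpd, fun α h0 h1 => ?_⟩
  obtain ⟨ha, hb⟩ := hm (1 - α) (by linarith) (by linarith)
  have hsum := hpd.2
  have e1 : ∑ x ∈ univ.filter (fun x => α ≤ 1 - g x), p x
      + ∑ x ∈ univ.filter (fun x => (1 : ℝ) - α < g x), p x = 1 := by
    have hfc : univ.filter (fun x => ¬ (α ≤ 1 - g x)) = univ.filter (fun x => (1:ℝ) - α < g x) := by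
      apply Finset.filter_congr; intro x _
      constructor <;> intro hx <;> simp at * <;> linarith
    have e := Finset.sum_filter_add_sum_filter_not univ (fun x => α ≤ 1 - g x) p
    rw [hfc, hsum] at e
    exact e
  have e2 : ∑ x ∈ univ.filter (fun x => α < 1 - f x), p x
      + ∑ x ∈ univ.filter (fun x => (1 : ℝ) - α ≤ f x), p x = 1 := by
    have hfc : univ.filter (fun x => ¬ (α < 1 - f x)) = univ.filter (fun x => (1:ℝ) - α ≤ f x) := by
      apply Finset.filter_congr; intro x _
      constructor <;> intro hx <;> simp at * <;> linarith
    have e := Finset.sum_filter_add_sum_filter_not univ (fun x => α < 1 - f x) p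
    rw [hfc, hsum] at e
    exact e
  constructor <;> linarith

/-- the mirror pair `(1 - π, 1 - δ)` of a cloud `(δ, π)` is again a
cloud, and it induces the same credal set. -/
theorem mirror_cloud [Fintype X] (δ π : X → ℝ) (h : IsCloud δ π) :
    IsCloud (fun x => 1 - π x) (fun x => 1 - δ x) ∧
      credalCloud (fun x => 1 - π x) (fun x => 1 - δ x) = credalCloud δ π := by
  obtain ⟨h0, h1, hle, ⟨x1, hx1⟩, ⟨y0, hy0⟩⟩ := h
  refine ⟨⟨fun x => by dsimp only; linarith [h1 x], fun x => by dsimp only; linarith [h0 x],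
    fun x => by dsimp only; linarith [hle x], ⟨y0, by simp [hy0]⟩, ⟨x1, by simp [hx1]⟩⟩, ?_⟩
  ext p
  constructor
  · intro hp
    have := credal_mirror_subset _ _ p hp
    obtain ⟨hpd, hm⟩ := this
    refine ⟨hpd, fun α ha hb => ?_⟩
    obtain ⟨h1', h2'⟩ := hm α ha hb
    constructor
    · refine le_trans (le_of_eq ?_) h1'
      congr 1
      apply Finset.filter_congr
      intro x _
      constructor <;> intro hx <;> simp at * <;> linarith
    · refine le_trans h2' (le_of_eq ?_)
      congr 1
      apply Finset.filter_congr
      intro x _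
      constructor <;> intro hx <;> simp at * <;> linarith
  · intro hp
    exact credal_mirror_subset _ _ p hp
end

section
/- Let (δ, π) be a cloud on a finite set X. Then the credal set 𝒫[δ,π] is nonempty if and only if for every nonempty proper subset A ⊊ X one has max_{x∈A} π(x) ≥ min_{y∉A} δ(y). -/
open Finset

attribute [local instance] Classical.propDecidable

variable {X : Type*}

private lemma telescope_upper (f : ℕ → ℝ) (hf : ∀ i, f i ≤ f (i + 1)) (α : ℝ) :
    ∀ m, (∑ i ∈ range m, if α ≤ f i then f (i + 1) - f i else 0) ≤
      (if α ≤ f m then f m - α else 0) := by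
  intro m
  induction m with
  | zero =>
    simp only [range_zero, sum_empty]
    split_ifs with h
    · linarith
    · exact le_refl 0
  | succ m ih =>
    rw [Finset.sum_range_succ]
    by_cases h1 : α ≤ f m
    · have h2 : α ≤ f (m + 1) := le_trans h1 (hf m)
      rw [if_pos h1] at *
      rw [if_pos h2]
      linarith
    · rw [if_neg h1] at *
      by_cases h2 : α ≤ f (m + 1)
      · rw [if_pos h2]
        push_neg at h1
        linarith
      · rw [if_neg h2]
        linarith

private lemma telescope_lower (f : ℕ → ℝ) (hf : ∀ i, f i ≤ f (i + 1)) (α : ℝ)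
    (hα : f 0 ≤ α) :
    ∀ m, f m - α ≤ ∑ i ∈ range m, if α < f (i + 1) then f (i + 1) - f i else 0 := by
  have hnn : ∀ m, 0 ≤ ∑ i ∈ range m, if α < f (i + 1) then f (i + 1) - f i else 0 := by
    intro m
    apply Finset.sum_nonneg
    intro i _
    split_ifs
    · linarith [hf i]
    · exact le_refl 0
  intro m
  induction m with
  | zero =>
    simp only [range_zero, sum_empty]
    linarith
  | succ m ih =>
    rw [Finset.sum_range_succ]
    by_cases h1 : α < f (m + 1)
    · rw [if_pos h1]
      linarith
    · rw [if_neg h1]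
      push_neg at h1
      linarith [hnn m]

/-- the credal set of a cloud `(δ, π)` on a finite set is nonempty
iff for every nonempty proper subset `A` of `X`, the maximum of `π` on `A` is at
least the minimum of `δ` outside `A`. -/
theorem cloud_credal_nonempty_iff [Fintype X] (δ π : X → ℝ) (h : IsCloud δ π) :
    (credalCloud δ π).Nonempty ↔
      ∀ A : Finset X, ∀ (hA : A.Nonempty) (hAc : Aᶜ.Nonempty),
        Aᶜ.inf' hAc δ ≤ A.sup' hA π := by
  obtain ⟨hδ0, hπ1, hδπ, ⟨x1, hx1⟩, ⟨y0, hy0⟩⟩ := h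
  constructor
  · rintro ⟨p, ⟨⟨hp01, hpsum⟩, hpα⟩⟩ A hA hAc
    by_contra hcon
    push_neg at hcon
    set m := A.sup' hA π with hm
    set M := Aᶜ.inf' hAc δ with hM
    have hm0 : 0 ≤ m := by
      obtain ⟨x, hx⟩ := hA
      exact le_trans (le_trans (hδ0 x) (hδπ x)) (Finset.le_sup' π hx)
    have hM1 : M ≤ 1 := by
      obtain ⟨y, hy⟩ := hAc
      exact le_trans (Finset.inf'_le δ hy) (le_trans (hδπ y) (hπ1 y))
    have key : ∀ α : ℝ, m < α → α < M → (∑ x ∈ Aᶜ, p x) = 1 - α := by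
      intro α h1 h2
      have hα0 : 0 ≤ α := le_of_lt (lt_of_le_of_lt hm0 h1)
      have hα1 : α ≤ 1 := le_of_lt (lt_of_lt_of_le h2 hM1)
      obtain ⟨c1, c2⟩ := hpα α hα0 hα1
      have sub1 : Aᶜ ⊆ univ.filter (fun x => α ≤ δ x) := by
        intro y hy
        simp only [mem_filter, mem_univ, true_and]
        exact le_trans (le_of_lt h2) (Finset.inf'_le δ hy)
      have sub2 : univ.filter (fun x => α < π x) ⊆ Aᶜ := by
        intro x hx
        simp only [mem_filter, mem_univ, true_and] at hx
        by_contra hxA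
        rw [Finset.mem_compl, not_not] at hxA
        linarith [Finset.le_sup' π hxA]
      have le1 : (∑ x ∈ Aᶜ, p x) ≤ 1 - α :=
        le_trans (Finset.sum_le_sum_of_subset_of_nonneg sub1 (fun i _ _ => (hp01 i).1)) c1
      have le2 : 1 - α ≤ ∑ x ∈ Aᶜ, p x :=
        le_trans c2 (Finset.sum_le_sum_of_subset_of_nonneg sub2 (fun i _ _ => (hp01 i).1))
      linarith
    have hmM : m < M := hcon
    have e1 := key ((2 * m + M) / 3) (by linarith) (by linarith)
    have e2 := key ((m + 2 * M) / 3) (by linarith) (by linarith)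
    have : (2 * m + M) / 3 = (m + 2 * M) / 3 := by linarith
    linarith
  · intro hyp
    -- Selection: every level u ∈ [0,1] is covered by some interval [δ x, π x].
    have hsel : ∀ u : ℝ, 0 ≤ u → u ≤ 1 → ∃ x, δ x ≤ u ∧ u ≤ π x := by
      intro u hu0 hu1
      by_cases hA : (univ.filter (fun x => π x < u)).Nonempty
      · have hAc : (univ.filter (fun x => π x < u))ᶜ.Nonempty := by
          refine ⟨x1, ?_⟩
          rw [Finset.mem_compl, mem_filter]
          push_neg
          intro _
          rw [hx1]; linarith
        have hle := hyp _ hA hAc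
        obtain ⟨y, hy, hyeq⟩ := Finset.exists_mem_eq_inf' hAc δ
        have hsup : (univ.filter (fun x => π x < u)).sup' hA π < u := by
          rw [Finset.sup'_lt_iff]
          intro i hi
          exact (mem_filter.mp hi).2
        have hδy : δ y < u := by rw [← hyeq]; linarith
        have hπy : u ≤ π y := by
          have hy' := Finset.mem_compl.mp hy
          rw [mem_filter] at hy'
          push_neg at hy'
          exact hy' (mem_univ y)
        exact ⟨y, le_of_lt hδy, hπy⟩
      · rw [Finset.not_nonempty_iff_eq_empty, Finset.filter_eq_empty_iff] at hA
        exact ⟨y0, by rw [hy0]; exact hu0, not_lt.mp (hA (mem_univ y0))⟩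
    classical
    -- Breakpoints
    set T : Finset ℝ := (univ.image δ ∪ univ.image π) ∪ {0, 1} with hT
    have h0T : (0 : ℝ) ∈ T := by simp [hT]
    have h1T : (1 : ℝ) ∈ T := by simp [hT]
    have hTmem : ∀ t ∈ T, 0 ≤ t ∧ t ≤ 1 := by
      intro t ht
      simp only [hT, Finset.mem_union, Finset.mem_image, Finset.mem_insert,
        Finset.mem_singleton, Finset.mem_univ, true_and] at ht
      rcases ht with (⟨x, rfl⟩ | ⟨x, rfl⟩) | (rfl | rfl)
      · exact ⟨hδ0 x, le_trans (hδπ x) (hπ1 x)⟩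
      · exact ⟨le_trans (hδ0 x) (hδπ x), hπ1 x⟩
      · constructor <;> norm_num
      · constructor <;> norm_num
    have hδT : ∀ x, δ x ∈ T := by
      intro x
      simp [hT]
    have hπT : ∀ x, π x ∈ T := by
      intro x
      simp [hT]
    set l : List ℝ := T.sort (· ≤ ·) with hl
    set n : ℕ := l.length with hn
    have hTne : T.Nonempty := ⟨0, h0T⟩
    have hnpos : 0 < n := by
      rw [hn, hl, Finset.length_sort]
      exact Finset.card_pos.mpr hTne
    set f : ℕ → ℝ := fun i => if h : i < n then l[i] else 1 with hf
    have hfget : ∀ i (hi : i < n), f i = l[i] := by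
      intro i hi
      rw [hf]
      simp [hi]
    have hmemf : ∀ i (hi : i < n), f i ∈ T := by
      intro i hi
      rw [hfget i hi]
      rw [← Finset.mem_sort (α := ℝ) (· ≤ ·)]
      exact List.getElem_mem hi
    have hstrict : ∀ i j (hi : i < n) (hj : j < n), i < j → f i < f j := by
      intro i j hi hj hij
      rw [hfget i hi, hfget j hj]
      exact List.pairwise_iff_getElem.mp (Finset.sortedLT_sort T).pairwise i j hi hj hij
    have hfsucc : ∀ i, f i ≤ f (i + 1) := by
      intro i
      by_cases h2 : i + 1 < n
      · exact le_of_lt (hstrict i (i + 1) (by omega) h2 (by omega))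
      · have : f (i + 1) = 1 := by rw [hf]; simp [h2]
        rw [this]
        by_cases h3 : i < n
        · exact (hTmem _ (hmemf i h3)).2
        · rw [hf]; simp [h3]
    have hfmono : Monotone f := monotone_nat_of_le_succ hfsucc
    have hf0 : f 0 = 0 := by
      have hmin : T.min' hTne = 0 := by
        refine le_antisymm (Finset.min'_le T 0 h0T) ?_
        exact (hTmem _ (Finset.min'_mem T hTne)).1
      rw [hfget 0 hnpos, ← hmin]
      exact Finset.sorted_zero_eq_min' (h := by rwa [← hl, ← hn])
    have hflast : f (n - 1) = 1 := by
      have hmax : T.max' hTne = 1 := by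
        refine le_antisymm ?_ (Finset.le_max' T 1 h1T)
        exact (hTmem _ (Finset.max'_mem T hTne)).2
      rw [hfget (n - 1) (by omega), ← hmax]
      exact Finset.sorted_last_eq_max' (h := by rw [← hl, ← hn]; omega)
    have hgap : ∀ t ∈ T, ∀ i, i + 1 < n → t ≤ f i ∨ f (i + 1) ≤ t := by
      intro t ht i hi
      have : t ∈ l := by rw [hl, Finset.mem_sort]; exact ht
      obtain ⟨j, hj, hjt⟩ := List.mem_iff_getElem.mp this
      rw [← hn] at hj
      have htf : t = f j := by rw [hfget j hj, hjt]
      by_cases hji : j ≤ i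
      · left; rw [htf]; exact hfmono hji
      · right; rw [htf]; exact hfmono (by omega)
    -- choice of representative points
    have hch : ∀ i : ℕ, ∃ x, i + 1 < n → δ x ≤ f i ∧ f (i + 1) ≤ π x := by
      intro i
      by_cases hi : i + 1 < n
      · have hlt : f i < f (i + 1) := hstrict i (i + 1) (by omega) hi (by omega)
        set u : ℝ := (f i + f (i + 1)) / 2 with hu
        have hu1 : f i < u := by rw [hu]; linarith
        have hu2 : u < f (i + 1) := by rw [hu]; linarith
        have hu0 : 0 ≤ u := by
          have : (0 : ℝ) ≤ f i := by rw [← hf0]; exact hfmono (Nat.zero_le i)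
          linarith
        have hule : u ≤ 1 := by
          have : f (i + 1) ≤ 1 := by
            rw [← hflast]; exact hfmono (by omega)
          linarith
        obtain ⟨x, hx1', hx2'⟩ := hsel u hu0 hule
        refine ⟨x, fun _ => ⟨?_, ?_⟩⟩
        · rcases hgap (δ x) (hδT x) i hi with hc | hc
          · exact hc
          · linarith
        · rcases hgap (π x) (hπT x) i hi with hc | hc
          · linarith
          · exact hc
      · exact ⟨x1, fun hcon => absurd hcon hi⟩
    choose c hc using hch
    set p : X → ℝ := fun x => ∑ i ∈ range (n - 1), if c i = x then f (i + 1) - f i else 0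
      with hp
    have hterm_nonneg : ∀ (x : X) (i : ℕ), 0 ≤ (if c i = x then f (i + 1) - f i else 0) := by
      intro x i
      split_ifs
      · linarith [hfsucc i]
      · exact le_refl 0
    have hsum_eq : ∀ S : Finset X,
        (∑ x ∈ S, p x) = ∑ i ∈ range (n - 1), if c i ∈ S then f (i + 1) - f i else 0 := by
      intro S
      rw [hp]
      rw [Finset.sum_comm]
      exact Finset.sum_congr rfl fun i _ => Finset.sum_ite_eq S (c i) _
    have hpnn : ∀ x, 0 ≤ p x := by
      intro x
      exact Finset.sum_nonneg fun i _ => hterm_nonneg x i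
    have hsum1 : ∑ x, p x = 1 := by
      rw [hsum_eq univ]
      simp only [Finset.mem_univ, if_true]
      rw [Finset.sum_range_sub f (n - 1), hflast, hf0]
      ring
    have hple : ∀ x, p x ≤ 1 := by
      intro x
      rw [← hsum1]
      exact Finset.single_le_sum (fun i _ => hpnn i) (mem_univ x)
    have hrange : ∀ i ∈ range (n - 1), i + 1 < n := by
      intro i hi
      rw [Finset.mem_range] at hi
      omega
    refine ⟨p, ⟨⟨fun x => ⟨hpnn x, hple x⟩, hsum1⟩, ?_⟩⟩
    intro α hα0 hα1
    constructor
    · rw [hsum_eq]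
      have step1 : (∑ i ∈ range (n - 1), if c i ∈ univ.filter (fun x => α ≤ δ x)
            then f (i + 1) - f i else 0)
          ≤ ∑ i ∈ range (n - 1), if α ≤ f i then f (i + 1) - f i else 0 := by
        apply Finset.sum_le_sum
        intro i hi
        have hi' := hrange i hi
        have hδc : δ (c i) ≤ f i := ((hc i) hi').1
        by_cases hmem : c i ∈ univ.filter (fun x => α ≤ δ x)
        · rw [if_pos hmem]
          rw [mem_filter] at hmem
          have : α ≤ f i := le_trans hmem.2 hδc
          rw [if_pos this]
        · rw [if_neg hmem]
          split_ifs
          · linarith [hfsucc i]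
          · exact le_refl 0
      refine le_trans step1 (le_trans (telescope_upper f hfsucc α (n - 1)) ?_)
      rw [hflast, if_pos hα1]
    · rw [hsum_eq]
      have step1 : (∑ i ∈ range (n - 1), if α < f (i + 1) then f (i + 1) - f i else 0)
          ≤ ∑ i ∈ range (n - 1), if c i ∈ univ.filter (fun x => α < π x)
            then f (i + 1) - f i else 0 := by
        apply Finset.sum_le_sum
        intro i hi
        have hi' := hrange i hi
        have hπc : f (i + 1) ≤ π (c i) := ((hc i) hi').2
        by_cases h2 : α < f (i + 1)
        · rw [if_pos h2]
          have : c i ∈ univ.filter (fun x => α < π x) := by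
            rw [mem_filter]
            exact ⟨mem_univ _, lt_of_lt_of_le h2 hπc⟩
          rw [if_pos this]
        · rw [if_neg h2]
          split_ifs
          · linarith [hfsucc i]
          · exact le_refl 0
      refine le_trans ?_ (le_trans step1 ?_)
      · have := telescope_lower f hfsucc α (by rw [hf0]; exact hα0) (n - 1)
        rw [hflast] at this
        exact this
      · exact le_refl _
end

section
/- Let (δ, π) be a cloud on a finite set X = {x₁, …, xₙ} whose elements are indexed so that π(x₁) ≤ π(x₂) ≤ … ≤ π(xₙ) = 1. Then the credal set 𝒫[δ,π] is nonempty if and only if the following n − 1 inequalities hold: for every i ∈ {1, …, n−1}, π(x_i) ≥ min_{j > i} δ(x_j). -/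
open Finset

attribute [local instance] Classical.propDecidable

variable {X : Type*}

/-- for a cloud `(δ, π)` on `X = {x₁, …, xₙ}` indexed so that
`π` is non-decreasing with `π xₙ = 1`, the credal set is nonempty iff
`π xᵢ ≥ min_{j > i} δ xⱼ` for every `i` with a nonempty tail
(i.e. `i ∈ {1, …, n-1}`). -/
theorem cloud_credal_nonempty_iff_chain {n : ℕ} (hn : 0 < n) (δ π : Fin n → ℝ)
    (h : IsCloud δ π) (hmono : Monotone π)
    (hlast : π ⟨n - 1, Nat.sub_lt hn Nat.one_pos⟩ = 1) :
    (credalCloud δ π).Nonempty ↔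
      ∀ i : Fin n, ∀ hi : (univ.filter (fun j => i < j)).Nonempty,
        (univ.filter (fun j => i < j)).inf' hi δ ≤ π i := by
  obtain ⟨hδ0, hπ1, hδπ, hπex, y₀, hy₀⟩ := h
  constructor
  · rintro ⟨p, ⟨⟨hp01, hpsum⟩, hcred⟩⟩ i hi
    set m := (univ.filter (fun j => i < j)).inf' hi δ with hm
    obtain ⟨j, hj, hjm⟩ := Finset.exists_mem_eq_inf' hi δ
    have hm0 : 0 ≤ m := by rw [hm, hjm]; exact hδ0 j
    have hm1 : m ≤ 1 := by rw [hm, hjm]; exact le_trans (hδπ j) (hπ1 j)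
    have hπi0 : 0 ≤ π i := le_trans (hδ0 i) (hδπ i)
    have h1 := (hcred (π i) hπi0 (hπ1 i)).2
    have h2 := (hcred m hm0 hm1).1
    have hsub : univ.filter (fun x => π i < π x) ⊆ univ.filter (fun x => m ≤ δ x) := by
      intro x hx
      simp only [mem_filter, mem_univ, true_and] at hx ⊢
      have hix : i < x := by
        by_contra hcon
        exact absurd (hmono (not_lt.1 hcon)) (not_le.2 hx)
      exact Finset.inf'_le δ (by simp [hix])
    have h3 := Finset.sum_le_sum_of_subset_of_nonneg hsub (fun x _ _ => (hp01 x).1)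
    linarith
  · intro hchain
    -- the extended cdf of π
    set F : ℕ → ℝ := fun k => if k = 0 then 0 else if h : k - 1 < n then π ⟨k - 1, h⟩ else 1
      with hFdef
    have hF0 : F 0 = 0 := by simp [hFdef]
    have hFn : F n = 1 := by
      simp only [hFdef]
      rw [if_neg hn.ne', dif_pos (Nat.sub_lt hn Nat.one_pos)]
      exact hlast
    have hFval : ∀ (k : ℕ) (hk : k < n), F (k + 1) = π ⟨k, hk⟩ := by
      intro k hk
      simp only [hFdef, Nat.add_sub_cancel]
      rw [if_neg (Nat.succ_ne_zero k), dif_pos hk]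
    have hFval' : ∀ (k : ℕ), 0 < k → ∀ (hk : k - 1 < n), F k = π ⟨k - 1, hk⟩ := by
      intro k hk0 hk
      simp only [hFdef]
      rw [if_neg (by omega : ¬ k = 0), dif_pos hk]
    have hFone : ∀ k : ℕ, n ≤ k → F k = 1 := by
      intro k hk
      rcases Nat.eq_or_lt_of_le hk with hk' | hk'
      · rw [← hk']; exact hFn
      · simp only [hFdef]
        rw [if_neg (by omega : ¬ k = 0), dif_neg (by omega : ¬ k - 1 < n)]
    have hπ0le : ∀ x : Fin n, 0 ≤ π x := fun x => le_trans (hδ0 x) (hδπ x)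
    have hFle1 : ∀ k, F k ≤ 1 := by
      intro k
      rcases Nat.eq_zero_or_pos k with hk0 | hk0
      · rw [hk0, hF0]; norm_num
      · rcases Nat.lt_or_ge (k - 1) n with hkn | hkn
        · rw [hFval' k hk0 hkn]; exact hπ1 _
        · rw [hFone k (by omega)]
    have hFmono : Monotone F := by
      apply monotone_nat_of_le_succ
      intro k
      rcases Nat.lt_or_ge k n with hkn | hkn
      · rw [hFval k hkn]
        rcases Nat.eq_zero_or_pos k with hk0 | hk0
        · subst hk0; rw [hF0]; exact hπ0le _
        · rw [hFval' k hk0 (by omega)]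
          exact hmono (Fin.mk_le_mk.mpr (by omega))
      · rw [hFone (k + 1) (by omega)]
        exact hFle1 k
    -- the chunks
    set c : ℕ → ℝ := fun k => F (k + 1) - F k with hcdef
    have hc0 : ∀ k, 0 ≤ c k := fun k => sub_nonneg.2 (hFmono (Nat.le_succ k))
    -- tail sums
    have hrangesum : ∀ k : ℕ, ∑ j ∈ range k, c j = F k := by
      intro k
      rw [hcdef, Finset.sum_range_sub F k, hF0, sub_zero]
    have htail : ∀ k : ℕ, k ≤ n →
        ∑ i ∈ univ.filter (fun i : Fin n => k ≤ i.val), c i.val = 1 - F k := by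
      intro k hk
      have e1 : ∑ i ∈ univ.filter (fun i : Fin n => k ≤ i.val), c i.val
          = ∑ i : Fin n, (if k ≤ i.val then c i.val else 0) := by
        rw [Finset.sum_filter]
      have e2 : ∑ i : Fin n, (if k ≤ i.val then c i.val else 0)
          = ∑ j ∈ range n, (if k ≤ j then c j else 0) :=
        Fin.sum_univ_eq_sum_range (fun j => if k ≤ j then c j else 0) n
      have e3 : ∑ j ∈ range n, (if k ≤ j then c j else 0)
          = ∑ j ∈ (range n).filter (fun j => k ≤ j), c j := by
        rw [Finset.sum_filter]
      have e4 : (range n).filter (fun j => k ≤ j) = Finset.Ico k n := by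
        ext j
        simp only [mem_filter, mem_range, Finset.mem_Ico]
        constructor
        · rintro ⟨h1, h2⟩; exact ⟨h2, h1⟩
        · rintro ⟨h1, h2⟩; exact ⟨h2, h1⟩
      rw [e1, e2, e3, e4, Finset.sum_Ico_eq_sub c hk, hrangesum, hrangesum, hFn]
    have htotal : ∑ i : Fin n, c i.val = 1 := by
      have := htail 0 (Nat.zero_le n)
      rw [hF0, sub_zero] at this
      rw [← this]
      congr 1
      apply (Finset.filter_true_of_mem ?_).symm
      intro i _
      exact Nat.zero_le _
    -- argmin of δ on the (closed) tail
    have hne : ∀ i : Fin n, (univ.filter (fun j => i ≤ j)).Nonempty :=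
      fun i => ⟨i, by simp⟩
    set m' : Fin n → ℝ := fun i => (univ.filter (fun j => i ≤ j)).inf' (hne i) δ with hm'def
    have hσex : ∀ i : Fin n, ∃ j : Fin n, i ≤ j ∧ δ j = m' i := by
      intro i
      obtain ⟨j, hj, hjv⟩ := Finset.exists_mem_eq_inf' (hne i) δ
      exact ⟨j, by simpa using hj, hjv.symm⟩
    choose σ hσle hσval using hσex
    have hm'le : ∀ i j : Fin n, i ≤ j → m' i ≤ δ j := by
      intro i j hij
      exact Finset.inf'_le δ (by simp [hij])
    -- the distribution
    set p : Fin n → ℝ := fun x => ∑ i ∈ univ.filter (fun i => σ i = x), c i.val with hpdef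
    have hfiber : ∀ S : Finset (Fin n),
        ∑ x ∈ S, p x = ∑ i ∈ univ.filter (fun i => σ i ∈ S), c i.val := by
      intro S
      rw [hpdef]
      exact Finset.sum_fiberwise_eq_sum_filter univ S σ (fun i => c i.val)
    have hpnn : ∀ x, 0 ≤ p x := fun x => Finset.sum_nonneg (fun i _ => hc0 i.val)
    have hpsum : ∑ x, p x = 1 := by
      rw [hfiber univ]
      rw [← htotal]
      congr 1
      apply Finset.filter_true_of_mem
      intro i _
      exact mem_univ _
    refine ⟨p, ⟨⟨fun x => ⟨hpnn x, ?_⟩, hpsum⟩, ?_⟩⟩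
    · -- p x ≤ 1
      rw [← hpsum]
      have : ∑ x₀ ∈ ({x} : Finset (Fin n)), p x₀ ≤ ∑ x₀, p x₀ :=
        Finset.sum_le_sum_of_subset_of_nonneg (Finset.subset_univ _) (fun y _ _ => hpnn y)
      simpa using this
    · intro α hα0 hα1
      constructor
      · -- upper constraint via δ
        rw [hfiber]
        have hfe : univ.filter (fun i => σ i ∈ univ.filter fun x => α ≤ δ x)
            = univ.filter (fun i : Fin n => α ≤ m' i) := by
          apply Finset.filter_congr
          intro i _
          simp [hσval i]
        rw [hfe]
        set T := univ.filter (fun i : Fin n => α ≤ m' i) with hT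
        rcases T.eq_empty_or_nonempty with hTe | hTne
        · rw [hTe]
          simp only [Finset.sum_empty]
          linarith
        · rcases eq_or_lt_of_le hα0 with hα0' | hαpos
          · -- α = 0
            have hle : ∑ i ∈ T, c i.val ≤ ∑ i : Fin n, c i.val :=
              Finset.sum_le_sum_of_subset_of_nonneg (Finset.subset_univ _)
                (fun i _ _ => hc0 i.val)
            rw [htotal] at hle
            linarith
          · set i₀ := T.min' hTne with hi₀def
            have hi₀T : i₀ ∈ T := T.min'_mem hTne
            have hi₀α : α ≤ m' i₀ := by
              rw [hT] at hi₀T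
              exact (mem_filter.1 hi₀T).2
            have hi₀pos : 0 < i₀.val := by
              by_contra hcon
              have h0 : i₀ ≤ y₀ := by rw [Fin.le_def]; omega
              have hy := hm'le i₀ y₀ h0
              rw [hy₀] at hy
              linarith
            have hTsub : T ⊆ univ.filter (fun i : Fin n => i₀.val ≤ i.val) := by
              intro i hiT
              simp only [mem_filter, mem_univ, true_and]
              exact T.min'_le i hiT
            have hb1 : ∑ i ∈ T, c i.val
                ≤ ∑ i ∈ univ.filter (fun i : Fin n => i₀.val ≤ i.val), c i.val :=
              Finset.sum_le_sum_of_subset_of_nonneg hTsub (fun i _ _ => hc0 i.val)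
            rw [htail i₀.val (le_of_lt i₀.isLt)] at hb1
            -- now need α ≤ F i₀.val
            have hkn : i₀.val - 1 < n := lt_of_le_of_lt (Nat.sub_le _ _) i₀.isLt
            have htne : (univ.filter (fun j => (⟨i₀.val - 1, hkn⟩ : Fin n) < j)).Nonempty :=
              ⟨i₀, by simp only [mem_filter, mem_univ, true_and, Fin.lt_def]; omega⟩
            have hch := hchain ⟨i₀.val - 1, hkn⟩ htne
            have hαinf : α ≤ (univ.filter
                (fun j => (⟨i₀.val - 1, hkn⟩ : Fin n) < j)).inf' htne δ := by
              apply Finset.le_inf'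
              intro j hj
              simp only [mem_filter, mem_univ, true_and, Fin.lt_def] at hj
              have hij : i₀ ≤ j := by rw [Fin.le_def]; omega
              exact le_trans hi₀α (hm'le i₀ j hij)
            have hFeq : F i₀.val = π ⟨i₀.val - 1, hkn⟩ := hFval' i₀.val hi₀pos hkn
            linarith
      · -- lower constraint via π
        rw [hfiber]
        have hsub2 : univ.filter (fun i : Fin n => α < π i)
            ⊆ univ.filter (fun i => σ i ∈ univ.filter fun x => α < π x) := by
          intro i hi
          simp only [mem_filter, mem_univ, true_and] at hi ⊢
          exact lt_of_lt_of_le hi (hmono (hσle i))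
        have hb2 : ∑ i ∈ univ.filter (fun i : Fin n => α < π i), c i.val
            ≤ ∑ i ∈ univ.filter (fun i => σ i ∈ univ.filter fun x => α < π x), c i.val :=
          Finset.sum_le_sum_of_subset_of_nonneg hsub2 (fun i _ _ => hc0 i.val)
        rcases lt_or_eq_of_le hα1 with hα1' | hα1'
        · set S := univ.filter (fun i : Fin n => α < π i) with hS
          have hSne : S.Nonempty := by
            refine ⟨⟨n - 1, Nat.sub_lt hn Nat.one_pos⟩, ?_⟩
            rw [hS]
            simp only [mem_filter, mem_univ, true_and]
            rw [hlast]
            exact hα1'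
          set i₀ := S.min' hSne with hi₀def
          have hi₀S : i₀ ∈ S := S.min'_mem hSne
          have hi₀α : α < π i₀ := by
            rw [hS] at hi₀S
            exact (mem_filter.1 hi₀S).2
          have htsub : univ.filter (fun i : Fin n => i₀.val ≤ i.val) ⊆ S := by
            intro j hj
            simp only [mem_filter, mem_univ, true_and] at hj
            rw [hS]
            simp only [mem_filter, mem_univ, true_and]
            exact lt_of_lt_of_le hi₀α (hmono (Fin.le_def.mpr hj))
          have hb3 : ∑ i ∈ univ.filter (fun i : Fin n => i₀.val ≤ i.val), c i.val
              ≤ ∑ i ∈ S, c i.val :=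
            Finset.sum_le_sum_of_subset_of_nonneg htsub (fun i _ _ => hc0 i.val)
          rw [htail i₀.val (le_of_lt i₀.isLt)] at hb3
          have hFα : F i₀.val ≤ α := by
            rcases Nat.eq_zero_or_pos i₀.val with h0 | hpos
            · rw [h0, hF0]; exact hα0
            · have hkn : i₀.val - 1 < n := lt_of_le_of_lt (Nat.sub_le _ _) i₀.isLt
              rw [hFval' i₀.val hpos hkn]
              by_contra hcon
              push_neg at hcon
              have hmem : (⟨i₀.val - 1, hkn⟩ : Fin n) ∈ S := by
                rw [hS]
                simp only [mem_filter, mem_univ, true_and]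
                exact hcon
              have hle := S.min'_le _ hmem
              have hle' : i₀.val ≤ i₀.val - 1 := hle
              omega
          linarith
        · -- α = 1
          have hnn : (0:ℝ) ≤ ∑ i ∈ univ.filter
              (fun i => σ i ∈ univ.filter fun x => α < π x), c i.val :=
            Finset.sum_nonneg (fun i _ => hc0 i.val)
          rw [← hα1']
          linarith
end

section
/- Let (δ, π) be a thin cloud on a finite nonempty set X, that is, a cloud with δ = π. Then its credal set is empty: 𝒫[δ,π] = ∅. -/
open Finset

attribute [local instance] Classical.propDecidable

variable {X : Type*}

/-- a thin cloud (`δ = π`) on a finite nonempty set has an empty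
credal set. -/
theorem thin_cloud_credal_empty [Fintype X] [Nonempty X] (δ π : X → ℝ)
    (h : IsCloud δ π) (hthin : δ = π) :
    credalCloud δ π = ∅ := by
  subst hthin
  ext p
  simp only [Set.mem_empty_iff_false, iff_false, credalCloud, Set.mem_setOf_eq]
  rintro ⟨⟨hp01, hsum⟩, hcred⟩
  have hzero : ∀ x, p x = 0 := by
    intro x
    have h0 : (0:ℝ) ≤ δ x := h.1 x
    have h1 : δ x ≤ 1 := h.2.1 x
    obtain ⟨hle, hge⟩ := hcred (δ x) h0 h1
    set S := univ.filter (fun y => δ x < δ y) with hS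
    set T := univ.filter (fun y => δ x ≤ δ y) with hT
    have hxS : x ∉ S := by simp [hS]
    have hins : insert x S ⊆ T := by
      intro y hy
      rcases Finset.mem_insert.1 hy with rfl | hy
      · simp [hT]
      · simp only [hS, Finset.mem_filter] at hy
        simp [hT, le_of_lt hy.2]
    have hsum1 : p x + ∑ y ∈ S, p y ≤ ∑ y ∈ T, p y := by
      rw [← Finset.sum_insert hxS]
      exact Finset.sum_le_sum_of_subset_of_nonneg hins (fun y _ _ => (hp01 y).1)
    have : p x + ∑ y ∈ S, p y ≤ ∑ y ∈ S, p y :=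
      hsum1.trans (hle.trans hge)
    have hx0 : p x ≤ 0 := by linarith
    exact le_antisymm hx0 (hp01 x).1
  rw [Finset.sum_congr rfl (fun x _ => hzero x)] at hsum
  simp at hsum
end

section
/- Let X = {x₁, …, xₙ} be a finite set and let π : X → [0,1] satisfy π(x₁) < π(x₂) < … < π(xₙ) = 1. Define δ : X → [0,1] by δ(x₁) = 0 and δ(x_i) = π(x_{i−1}) for i ≥ 2. Then (δ, π) is a cloud on X whose credal set contains exactly one probability distribution, namely the p given by p(x_i) = π(x_i) − π(x_{i−1}) for all i (with the convention π(x₀) = 0). -/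
open Finset

attribute [local instance] Classical.propDecidable

variable {X : Type*}

namespace ThinCloudAux

variable {n : ℕ}

/-- Extension of `π` with the convention `G 0 = 0`, `G k = π (k-1)` for `1 ≤ k ≤ n`. -/
noncomputable def G (n : ℕ) (π : Fin n → ℝ) (k : ℕ) : ℝ :=
  if h : 0 < k ∧ k - 1 < n then π ⟨k - 1, h.2⟩ else 0

lemma filter_insert (k : ℕ) (hk : k < n) (f : Fin n → ℝ) :
    ∑ i ∈ univ.filter (fun i : Fin n => k ≤ i.val), f i
      = f ⟨k, hk⟩ + ∑ i ∈ univ.filter (fun i : Fin n => k + 1 ≤ i.val), f i := by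
  have h : univ.filter (fun i : Fin n => k ≤ i.val)
      = insert ⟨k, hk⟩ (univ.filter (fun i : Fin n => k + 1 ≤ i.val)) := by
    ext i
    simp only [mem_filter, mem_univ, true_and, mem_insert, Fin.ext_iff]
    omega
  rw [h, Finset.sum_insert (by simp)]

lemma tail_sum (π : Fin n → ℝ) (f : Fin n → ℝ)
    (hf : ∀ i : Fin n, f i = G n π (i.val + 1) - G n π i.val) :
    ∀ d k, k + d = n →
      ∑ i ∈ univ.filter (fun i : Fin n => k ≤ i.val), f i = G n π n - G n π k := by
  intro d
  induction d with
  | zero =>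
    intro k hk
    have h : univ.filter (fun i : Fin n => k ≤ i.val) = ∅ := by
      ext i
      simp only [mem_filter, mem_univ, true_and, notMem_empty, iff_false, not_le]
      have := i.isLt
      omega
    have hkn : k = n := by omega
    rw [h, hkn, Finset.sum_empty]
    ring
  | succ d ih =>
    intro k hk
    have hkn : k < n := by omega
    rw [filter_insert k hkn, hf, ih (k + 1) (by omega)]
    simp only [Fin.val_mk]
    ring

lemma upper_filter (S : Finset (Fin n)) (hne : S.Nonempty)
    (hS : ∀ ⦃i j : Fin n⦄, i ∈ S → i ≤ j → j ∈ S) :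
    S = univ.filter (fun i : Fin n => (S.min' hne).val ≤ i.val) := by
  ext i
  simp only [mem_filter, mem_univ, true_and]
  constructor
  · exact fun h => S.min'_le i h
  · intro h
    exact hS (S.min'_mem hne) h

end ThinCloudAux

open ThinCloudAux in
/-- if `π` is strictly increasing on `X = {x₁, …, xₙ}` with
`π xₙ = 1`, and `δ x₁ = 0`, `δ xᵢ = π xᵢ₋₁` for `i ≥ 2`, then `(δ, π)` is a
cloud whose credal set contains exactly one probability distribution, namely
`p xᵢ = π xᵢ - π xᵢ₋₁` (with the convention `π x₀ = 0`). -/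
theorem thin_like_cloud_singleton {n : ℕ} (hn : 0 < n) (π δ p : Fin n → ℝ)
    (hpos : ∀ i, 0 ≤ π i) (hmono : StrictMono π)
    (hlast : π ⟨n - 1, Nat.sub_lt hn Nat.one_pos⟩ = 1)
    (hδ : ∀ i : Fin n, δ i = if h0 : i.val = 0 then 0
      else π ⟨i.val - 1, lt_trans (Nat.sub_lt (Nat.pos_of_ne_zero h0) Nat.one_pos) i.isLt⟩)
    (hp : ∀ i : Fin n, p i = π i - (if h0 : i.val = 0 then 0
      else π ⟨i.val - 1, lt_trans (Nat.sub_lt (Nat.pos_of_ne_zero h0) Nat.one_pos) i.isLt⟩)) :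
    IsCloud δ π ∧ credalCloud δ π = {p} := by
  -- basic facts about π
  have hπ1 : ∀ i, π i ≤ 1 := by
    intro i
    calc π i ≤ π ⟨n - 1, Nat.sub_lt hn Nat.one_pos⟩ := by
          apply hmono.monotone
          simp only [Fin.le_def]
          omega
      _ = 1 := hlast
  -- facts about G
  have hG0 : G n π 0 = 0 := by simp [G]
  have hGn : G n π n = 1 := by
    rw [G, dif_pos ⟨hn, Nat.sub_lt hn Nat.one_pos⟩]
    exact hlast
  have hGval : ∀ k (h1 : 0 < k) (h2 : k - 1 < n), G n π k = π ⟨k - 1, h2⟩ := by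
    intro k h1 h2
    rw [G, dif_pos ⟨h1, h2⟩]
  have hGpos : ∀ k, 0 ≤ G n π k := by
    intro k
    rw [G]
    split
    · exact hpos _
    · exact le_refl 0
  have hGle1 : ∀ k, G n π k ≤ 1 := by
    intro k
    rw [G]
    split
    · exact hπ1 _
    · exact zero_le_one
  -- p i = G (i+1) - G i
  have hpG : ∀ i : Fin n, p i = G n π (i.val + 1) - G n π i.val := by
    intro i
    rw [hp]
    congr 1
    · rw [hGval (i.val + 1) (Nat.succ_pos _) (by simpa using i.isLt)]
      congr 1
    · by_cases h0 : i.val = 0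
      · rw [dif_pos h0, h0, hG0]
      · rw [dif_neg h0,
          hGval i.val (Nat.pos_of_ne_zero h0)
            (lt_trans (Nat.sub_lt (Nat.pos_of_ne_zero h0) Nat.one_pos) i.isLt)]
  -- tail sums of p
  have hTp : ∀ k, k ≤ n →
      ∑ i ∈ univ.filter (fun i : Fin n => k ≤ i.val), p i = 1 - G n π k := by
    intro k hk
    rw [tail_sum π p hpG (n - k) k (by omega), hGn]
  -- δ facts
  have hδ0 : δ ⟨0, hn⟩ = 0 := by rw [hδ]; simp
  have hδval : ∀ (i : Fin n) (h0 : i.val ≠ 0),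
      δ i = π ⟨i.val - 1, lt_trans (Nat.sub_lt (Nat.pos_of_ne_zero h0) Nat.one_pos) i.isLt⟩ := by
    intro i h0
    rw [hδ, dif_neg h0]
  have hδpos : ∀ i, 0 ≤ δ i := by
    intro i
    rw [hδ]
    split
    · exact le_refl 0
    · exact hpos _
  have hδleπ : ∀ i, δ i ≤ π i := by
    intro i
    rw [hδ]
    split
    · exact hpos i
    · apply hmono.monotone
      simp only [Fin.le_def]
      omega
  have hδmono : ∀ i j : Fin n, i ≤ j → δ i ≤ δ j := by
    intro i j hij
    rw [hδ i, hδ j]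
    by_cases hj : j.val = 0
    · have hi : i.val = 0 := by
        have := Fin.le_def.mp hij
        omega
      rw [dif_pos hi, dif_pos hj]
    · rw [dif_neg hj]
      by_cases hi : i.val = 0
      · rw [dif_pos hi]; exact hpos _
      · rw [dif_neg hi]
        apply hmono.monotone
        simp only [Fin.le_def]
        have := Fin.le_def.mp hij
        omega
  -- the cloud
  have hcloud : IsCloud δ π :=
    ⟨hδpos, hπ1, hδleπ, ⟨⟨n - 1, Nat.sub_lt hn Nat.one_pos⟩, hlast⟩, ⟨⟨0, hn⟩, hδ0⟩⟩
  -- p is a probability distribution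
  have hpnn : ∀ i, 0 ≤ p i := by
    intro i
    rw [hpG]
    by_cases h0 : i.val = 0
    · rw [h0, hG0, hGval 1 one_pos (by omega)]
      simpa using hpos _
    · rw [hGval (i.val + 1) (Nat.succ_pos _) (by simpa using i.isLt),
        hGval i.val (Nat.pos_of_ne_zero h0)
          (lt_trans (Nat.sub_lt (Nat.pos_of_ne_zero h0) Nat.one_pos) i.isLt)]
      have : (⟨i.val - 1, by have := i.isLt; omega⟩ : Fin n) < ⟨i.val + 1 - 1, by simpa using i.isLt⟩ := by
        simp only [Fin.lt_def]
        omega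
      linarith [hmono this]
  have hpsum : ∑ x, p x = 1 := by
    have h := hTp 0 (Nat.zero_le n)
    have huniv : univ.filter (fun i : Fin n => 0 ≤ i.val) = univ := by
      ext i; simp
    rw [huniv] at h
    rw [h, hG0]
    ring
  have hpdist : IsProbDist p := by
    refine ⟨fun i => ⟨hpnn i, ?_⟩, hpsum⟩
    rw [hpG]
    have := hGle1 (i.val + 1)
    have := hGpos i.val
    linarith
  -- p is in the credal set
  have hpmem : p ∈ credalCloud δ π := by
    refine ⟨hpdist, fun α hα0 hα1 => ⟨?_, ?_⟩⟩
    · -- upper: sum over {α ≤ δ x} ≤ 1 - α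
      by_cases hne : (univ.filter (fun i : Fin n => α ≤ δ i)).Nonempty
      · set S := univ.filter (fun i : Fin n => α ≤ δ i) with hS
        have hup : ∀ ⦃i j : Fin n⦄, i ∈ S → i ≤ j → j ∈ S := by
          intro i j hi hij
          simp only [hS, mem_filter, mem_univ, true_and] at hi ⊢
          exact le_trans hi (hδmono i j hij)
        have heq := upper_filter S hne hup
        set m := (S.min' hne).val with hm
        have hmlt : m < n := (S.min' hne).isLt
        have hαG : α ≤ G n π m := by
          have hmem : S.min' hne ∈ S := S.min'_mem hne
          simp only [hS, mem_filter, mem_univ, true_and] at hmem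
          by_cases h0 : m = 0
          · rw [h0, hG0]
            have : S.min' hne = ⟨0, hn⟩ := by ext; simpa using h0
            rw [this, hδ0] at hmem
            exact hmem
          · rw [hGval m (Nat.pos_of_ne_zero h0) (by omega)]
            rw [hδval (S.min' hne) h0] at hmem
            exact hmem
        calc ∑ x ∈ S, p x = 1 - G n π m := by rw [heq]; exact hTp m (le_of_lt hmlt)
          _ ≤ 1 - α := by linarith
      · rw [not_nonempty_iff_eq_empty] at hne
        rw [hne]
        simp
        linarith
    · -- lower: 1 - α ≤ sum over {α < π x}
      by_cases hne : (univ.filter (fun i : Fin n => α < π i)).Nonempty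
      · set S := univ.filter (fun i : Fin n => α < π i) with hS
        have hup : ∀ ⦃i j : Fin n⦄, i ∈ S → i ≤ j → j ∈ S := by
          intro i j hi hij
          simp only [hS, mem_filter, mem_univ, true_and] at hi ⊢
          exact lt_of_lt_of_le hi (hmono.monotone hij)
        have heq := upper_filter S hne hup
        set m := (S.min' hne).val with hm
        have hmlt : m < n := (S.min' hne).isLt
        have hGα : G n π m ≤ α := by
          by_cases h0 : m = 0
          · rw [h0, hG0]; exact hα0
          · rw [hGval m (Nat.pos_of_ne_zero h0) (by omega)]
            by_contra hcon
            push_neg at hcon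
            have hmem : (⟨m - 1, by omega⟩ : Fin n) ∈ S := by
              simp only [hS, mem_filter, mem_univ, true_and]
              exact hcon
            have := S.min'_le _ hmem
            rw [Fin.le_def] at this
            simp only [← hm] at this
            omega
        calc (1 : ℝ) - α ≤ 1 - G n π m := by linarith
          _ = ∑ x ∈ S, p x := by rw [heq]; exact (hTp m (le_of_lt hmlt)).symm
      · rw [not_nonempty_iff_eq_empty] at hne
        have h1α : (1 : ℝ) ≤ α := by
          have hmem : (⟨n - 1, Nat.sub_lt hn Nat.one_pos⟩ : Fin n) ∉
              univ.filter (fun i : Fin n => α < π i) := by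
            rw [hne]; exact notMem_empty _
          simp only [mem_filter, mem_univ, true_and, not_lt] at hmem
          rw [hlast] at hmem
          exact hmem
        rw [hne]
        simp
        linarith
  refine ⟨hcloud, ?_⟩
  ext q
  simp only [Set.mem_singleton_iff]
  constructor
  · rintro ⟨⟨hq01, hqsum⟩, hqcons⟩
    -- tail sums of q
    have hTq : ∀ k, k ≤ n →
        ∑ i ∈ univ.filter (fun i : Fin n => k ≤ i.val), q i = 1 - G n π k := by
      intro k hk
      by_cases h0 : k = 0
      · subst h0
        have huniv : univ.filter (fun i : Fin n => 0 ≤ i.val) = univ := by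
          ext i; simp
        rw [huniv, hqsum, hG0]
        ring
      · have hk1 : 1 ≤ k := Nat.pos_of_ne_zero h0
        set α := G n π k with hα
        have hαval : α = π ⟨k - 1, by omega⟩ := hGval k hk1 (by omega)
        obtain ⟨hub, hlb⟩ := hqcons α (hGpos k) (hGle1 k)
        -- lower bound: the π-filter is exactly the tail
        have heq : univ.filter (fun i : Fin n => α < π i)
            = univ.filter (fun i : Fin n => k ≤ i.val) := by
          ext i
          simp only [mem_filter, mem_univ, true_and]
          rw [hαval, hmono.lt_iff_lt, Fin.lt_def]
          simp only [Fin.val_mk]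
          omega
        rw [heq] at hlb
        -- upper bound: tail ⊆ the δ-filter
        have hsub : univ.filter (fun i : Fin n => k ≤ i.val)
            ⊆ univ.filter (fun i : Fin n => α ≤ δ i) := by
          intro i hi
          simp only [mem_filter, mem_univ, true_and] at hi ⊢
          have hi0 : i.val ≠ 0 := by omega
          rw [hδval i hi0, hαval]
          apply hmono.monotone
          simp only [Fin.le_def]
          omega
        have hub' : ∑ i ∈ univ.filter (fun i : Fin n => k ≤ i.val), q i ≤ 1 - α :=
          le_trans (Finset.sum_le_sum_of_subset_of_nonneg hsub
            (fun i _ _ => (hq01 i).1)) hub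
        linarith
    funext i
    have h1 := hTq i.val (le_of_lt i.isLt)
    have h2 := hTq (i.val + 1) i.isLt
    rw [filter_insert i.val i.isLt q] at h1
    have hi : (⟨i.val, i.isLt⟩ : Fin n) = i := by ext; rfl
    rw [hi] at h1
    rw [hpG]
    linarith
  · intro h
    subst h
    exact hpmem
end

section
/- Let (δ, π) be a cloud on a finite set X. Then δ and π are comonotonic if and only if the family of all sets of the form B_β = {x ∈ X : π(x) > β} (β ∈ [0,1]) and C_{β'} = {x ∈ X : δ(x) ≥ β'} (β' ∈ [0,1]) is totally ordered by inclusion, i.e., for all β, β' ∈ [0,1] one has B_β ⊆ C_{β'} or C_{β'} ⊆ B_β. -/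
open Finset

attribute [local instance] Classical.propDecidable

variable {X : Type*}

/-- Two maps `δ, π : X → [0,1]` are comonotonic when there are no `x, y` with
`δ x < δ y` and `π x > π y`. -/
def Comonotonic (δ π : X → ℝ) : Prop := ∀ x y, δ x < δ y → π x ≤ π y

/-- the two distributions of a cloud `(δ, π)` are comonotonic iff
the family of all sets `B_β = {x | π x > β}` and `C_β' = {x | δ x ≥ β'}`
(for `β, β' ∈ [0,1]`) is totally ordered by inclusion, i.e. any `B_β` and
`C_β'` are comparable. -/
theorem comonotonic_iff_nested [Fintype X] (δ π : X → ℝ) (h : IsCloud δ π) :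
    Comonotonic δ π ↔
      ∀ β β' : ℝ, β ∈ Set.Icc (0 : ℝ) 1 → β' ∈ Set.Icc (0 : ℝ) 1 →
        ({x | β < π x} ⊆ {x | β' ≤ δ x} ∨ {x | β' ≤ δ x} ⊆ {x | β < π x}) := by
  obtain ⟨hδ0, hπ1, hδπ, _, _⟩ := h
  constructor
  · intro hc β β' _ _
    by_contra hcon
    push_neg at hcon
    rw [Set.not_subset, Set.not_subset] at hcon
    obtain ⟨⟨x, hx, hx'⟩, ⟨y, hy, hy'⟩⟩ := hcon
    simp only [Set.mem_setOf_eq, not_le, not_lt] at *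
    exact absurd (hc x y (lt_of_lt_of_le hx' hy)) (not_le.mpr (lt_of_le_of_lt hy' hx))
  · intro hn x y hxy
    by_contra hpi
    push_neg at hpi
    have hβ : π y ∈ Set.Icc (0:ℝ) 1 := ⟨le_trans (hδ0 y) (hδπ y), hπ1 y⟩
    have hβ' : δ y ∈ Set.Icc (0:ℝ) 1 := ⟨hδ0 y, le_trans (hδπ y) (hπ1 y)⟩
    rcases hn (π y) (δ y) hβ hβ' with hs | hs
    · exact absurd (hs (show π y < π x from hpi)) (not_le.mpr hxy)
    · exact absurd (hs (le_refl (δ y))) (lt_irrefl (π y))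
end

section
/- Let (δ, π) be a comonotonic cloud on a finite set X = {x₁, …, xₙ}, indexed so that i ≤ j implies δ(x_i) ≤ δ(x_j) and π(x_i) ≤ π(x_j) (such an indexing exists by comonotonicity). Then a probability distribution p on X belongs to 𝒫[δ,π] if and only if for every i ∈ {1, …, n−1}, δ(x_{i+1}) ≤ P({x₁, …, x_i}) ≤ π(x_i). In other words, the comonotonic cloud is representable as the generalized p-box with cumulative bounds F̲(x_i) = δ(x_{i+1}) (and F̲(xₙ) = 1) and F̄(x_i) = π(x_i) on the chain of sets A_i = {x₁, …, x_i}. -/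
open Finset

attribute [local instance] Classical.propDecidable

variable {X : Type*}

/-- a comonotonic cloud `(δ, π)` on `X = {x₁, …, xₙ}` (indexed so
that both `δ` and `π` are non-decreasing) is exactly the generalized p-box with
bounds `δ xᵢ₊₁ ≤ P({x₁, …, xᵢ}) ≤ π xᵢ` for `i ∈ {1, …, n-1}`: a probability
distribution belongs to the credal set of the cloud iff it satisfies these
`n - 1` pairs of inequalities. -/
theorem comonotonic_cloud_eq_genpbox {n : ℕ} (δ π : Fin n → ℝ) (h : IsCloud δ π)
    (hcom : Comonotonic δ π) (hδm : Monotone δ) (hπm : Monotone π)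
    (p : Fin n → ℝ) (hp : IsProbDist p) :
    p ∈ credalCloud δ π ↔
      ∀ i : Fin n, ∀ hi : i.val + 1 < n,
        δ ⟨i.val + 1, hi⟩ ≤ ∑ j ∈ univ.filter (fun j => j ≤ i), p j ∧
        ∑ j ∈ univ.filter (fun j => j ≤ i), p j ≤ π i := by
  obtain ⟨hp01, hpsum⟩ := hp
  obtain ⟨hδ0, hπ1, hδπ, ⟨x1, hx1⟩, ⟨y0, hy0⟩⟩ := h
  rcases Nat.eq_zero_or_pos n with hn | hn
  · subst hn; simp at hpsum
  have hsplit : ∀ i : Fin n,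
      (∑ j ∈ univ.filter (fun j => ¬ j ≤ i), p j)
        = 1 - ∑ j ∈ univ.filter (fun j => j ≤ i), p j := by
    intro i
    have := Finset.sum_filter_add_sum_filter_not univ (fun j => j ≤ i) p
    rw [hpsum] at this
    linarith
  constructor
  · rintro ⟨-, hcred⟩ i hi
    have hδα0 : (0:ℝ) ≤ δ ⟨i.val + 1, hi⟩ := hδ0 _
    have hδα1 : δ ⟨i.val + 1, hi⟩ ≤ 1 := (hδπ _).trans (hπ1 _)
    have hπα0 : (0:ℝ) ≤ π i := (hδ0 i).trans (hδπ i)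
    have hπα1 : π i ≤ 1 := hπ1 i
    constructor
    · have h1 := (hcred _ hδα0 hδα1).1
      have hsub : (univ.filter (fun j : Fin n => ¬ j ≤ i))
          ⊆ univ.filter (fun x => δ ⟨i.val + 1, hi⟩ ≤ δ x) := by
        intro j hj
        simp only [mem_filter, mem_univ, true_and] at hj ⊢
        apply hδm
        have : i < j := lt_of_not_ge hj
        exact Fin.mk_le_of_le_val this
      have hge := Finset.sum_le_sum_of_subset_of_nonneg hsub
        (fun x _ _ => (hp01 x).1)
      rw [hsplit i] at hge
      linarith
    · have h2 := (hcred _ hπα0 hπα1).2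
      have hsub : (univ.filter (fun x => π i < π x))
          ⊆ (univ.filter (fun j : Fin n => ¬ j ≤ i)) := by
        intro j hj
        simp only [mem_filter, mem_univ, true_and] at hj ⊢
        intro hji
        exact absurd (hπm hji) (not_le.mpr hj)
      have hge := Finset.sum_le_sum_of_subset_of_nonneg hsub
        (fun x _ _ => (hp01 x).1)
      rw [hsplit i] at hge
      linarith
  · intro hyp
    refine ⟨⟨hp01, hpsum⟩, ?_⟩
    intro α hα0 hα1
    constructor
    · -- lower cloud condition
      set S := univ.filter (fun x => α ≤ δ x) with hS
      by_cases hne : S.Nonempty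
      · set i0 := S.min' hne with hi0
        have hi0S : i0 ∈ S := S.min'_mem hne
        have hαδ : α ≤ δ i0 := by
          simpa [hS] using hi0S
        have hSeq : S = univ.filter (fun j => i0 ≤ j) := by
          ext j
          simp only [hS, mem_filter, mem_univ, true_and]
          constructor
          · intro hj
            exact S.min'_le j (by simp [hS, hj])
          · intro hj
            exact hαδ.trans (hδm hj)
        rcases Nat.eq_zero_or_pos i0.val with h0 | h0
        · -- i0 = 0 : α must be 0
          have : i0 ≤ y0 := by
            rw [Fin.le_def, h0]; exact Nat.zero_le _
          have hδi0 : δ i0 ≤ 0 := by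
            have := hδm this
            rw [hy0] at this; exact this
          have hα : α ≤ 0 := hαδ.trans hδi0
          have hle : ∑ x ∈ S, p x ≤ ∑ x, p x :=
            Finset.sum_le_sum_of_subset_of_nonneg (Finset.filter_subset _ _)
              (fun x _ _ => (hp01 x).1)
          rw [hpsum] at hle
          linarith
        · -- i0 = m+1
          obtain ⟨m, hm⟩ : ∃ m, i0.val = m + 1 := ⟨i0.val - 1, by omega⟩
          have hmn : m < n := by have := i0.isLt; omega
          have hi' : m + 1 < n := by have := i0.isLt; omega
          have hi0eq : i0 = ⟨m + 1, hi'⟩ := by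
            apply Fin.ext; simp [hm]
          have hkey := (hyp ⟨m, hmn⟩ hi').1
          have hSeq2 : S = univ.filter (fun j : Fin n => ¬ j ≤ ⟨m, hmn⟩) := by
            rw [hSeq]
            ext j
            simp only [mem_filter, mem_univ, true_and, Fin.le_def, hi0eq, not_le]
            omega
          rw [hSeq2, hsplit ⟨m, hmn⟩]
          have : α ≤ δ ⟨m + 1, hi'⟩ := by rw [← hi0eq]; exact hαδ
          linarith
      · have : ∑ x ∈ S, p x = 0 := by
          rw [Finset.not_nonempty_iff_eq_empty.mp hne, Finset.sum_empty]
        rw [hS] at this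
        rw [this]
        linarith
    · -- upper cloud condition
      set T := univ.filter (fun x => α < π x) with hT
      by_cases hne : T.Nonempty
      · set i0 := T.min' hne with hi0
        have hi0T : i0 ∈ T := T.min'_mem hne
        have hαπ : α < π i0 := by simpa [hT] using hi0T
        have hTeq : T = univ.filter (fun j => i0 ≤ j) := by
          ext j
          simp only [hT, mem_filter, mem_univ, true_and]
          constructor
          · intro hj
            exact T.min'_le j (by simp [hT, hj])
          · intro hj
            exact hαπ.trans_le (hπm hj)
        rcases Nat.eq_zero_or_pos i0.val with h0 | h0
        · have hTuniv : T = univ := by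
            rw [hTeq]
            ext j
            simp only [mem_filter, mem_univ, true_and, iff_true, Fin.le_def, h0]
            exact Nat.zero_le _
          rw [hTuniv, hpsum]
          linarith
        · obtain ⟨m, hm⟩ : ∃ m, i0.val = m + 1 := ⟨i0.val - 1, by omega⟩
          have hmn : m < n := by have := i0.isLt; omega
          have hi' : m + 1 < n := by have := i0.isLt; omega
          have hi0eq : i0 = ⟨m + 1, hi'⟩ := by
            apply Fin.ext; simp [hm]
          have hπm_le : π ⟨m, hmn⟩ ≤ α := by
            by_contra hc
            push_neg at hc
            have : (⟨m, hmn⟩ : Fin n) ∈ T := by simp [hT, hc]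
            have := T.min'_le _ this
            rw [← hi0, hi0eq, Fin.le_def] at this
            simp at this
          have hkey := (hyp ⟨m, hmn⟩ hi').2
          have hTeq2 : T = univ.filter (fun j : Fin n => ¬ j ≤ ⟨m, hmn⟩) := by
            rw [hTeq]
            ext j
            simp only [mem_filter, mem_univ, true_and, Fin.le_def, hi0eq, not_le]
            omega
          rw [hTeq2, hsplit ⟨m, hmn⟩]
          linarith
      · -- T empty means α ≥ 1
        have hx1' : π x1 ≤ α := by
          by_contra hc
          push_neg at hc
          exact hne ⟨x1, by simp [hT, hc]⟩
        rw [hx1] at hx1'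
        have : ∑ x ∈ T, p x = 0 := by
          rw [Finset.not_nonempty_iff_eq_empty.mp hne, Finset.sum_empty]
        rw [hT] at this
        rw [this]
        linarith
end

section
/- Let (F̲, F̄) be a generalized p-box on a finite set X = {x₁, …, xₙ}, indexed so that i ≤ j implies F̲(x_i) ≤ F̲(x_j) and F̄(x_i) ≤ F̄(x_j) (such an indexing exists by comonotonicity), with credal set 𝒫[F̲,F̄] = {p : for all i, F̲(x_i) ≤ P({x₁,…,x_i}) ≤ F̄(x_i)}. Define π = F̄ and δ by δ(x₁) = 0 and δ(x_i) = F̲(x_{i−1}) for i ≥ 2. Then (δ, π) is a comonotonic cloud on X and 𝒫[δ,π] = 𝒫[F̲,F̄]; hence every generalized p-box is representable by a comonotonic cloud. -/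
open Finset

attribute [local instance] Classical.propDecidable

variable {X : Type*}

/-- a generalized p-box `(F̲, F̄)` on `X = {x₁, …, xₙ}` (indexed so
that both bounds are non-decreasing) is representable by the comonotonic cloud
`π = F̄`, `δ x₁ = 0` and `δ xᵢ = F̲ xᵢ₋₁` for `i ≥ 2`: the pair `(δ, π)` is a
comonotonic cloud with the same credal set as the p-box. -/
theorem genpbox_is_comonotonic_cloud {n : ℕ} (Flow Fupp : Fin n → ℝ)
    (hbounds : ∀ i, 0 ≤ Flow i ∧ Fupp i ≤ 1) (hle : ∀ i, Flow i ≤ Fupp i)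
    (hFlm : Monotone Flow) (hFum : Monotone Fupp)
    (hone : ∃ i, Flow i = 1 ∧ Fupp i = 1)
    (δ π : Fin n → ℝ) (hπ : π = Fupp)
    (hδ : ∀ i : Fin n, δ i = if h0 : i.val = 0 then 0
      else Flow ⟨i.val - 1, lt_trans (Nat.sub_lt (Nat.pos_of_ne_zero h0) Nat.one_pos) i.isLt⟩) :
    IsCloud δ π ∧ Comonotonic δ π ∧
      credalCloud δ π =
        {p | IsProbDist p ∧ ∀ i : Fin n,
          Flow i ≤ ∑ j ∈ univ.filter (fun j => j ≤ i), p j ∧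
          ∑ j ∈ univ.filter (fun j => j ≤ i), p j ≤ Fupp i} := by
  obtain ⟨i1, hi1l, hi1u⟩ := hone
  have hn : 0 < n := i1.pos
  have hδ0 : ∀ x, 0 ≤ δ x := by
    intro x; rw [hδ]; split
    · exact le_refl 0
    · exact (hbounds _).1
  have hδπ : ∀ x, δ x ≤ π x := by
    intro x; rw [hδ, hπ]; split
    · exact le_trans (hbounds x).1 (hle x)
    · exact le_trans (hFlm (show (⟨x.val - 1, _⟩ : Fin n) ≤ x from Nat.sub_le _ _)) (hle x)
  have hδm : Monotone δ := by
    intro a b hab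
    rw [hδ a, hδ b]
    by_cases ha : a.val = 0
    · simp only [ha, dif_pos]
      split
      · exact le_refl 0
      · exact (hbounds _).1
    · have hb : b.val ≠ 0 := by
        intro hb
        exact ha (Nat.le_antisymm (hb ▸ (Fin.le_def.mp hab)) (Nat.zero_le _))
      rw [dif_neg ha, dif_neg hb]
      exact hFlm (show (⟨a.val - 1, _⟩ : Fin n) ≤ ⟨b.val - 1, _⟩ from
        Nat.sub_le_sub_right (Fin.le_def.mp hab) 1)
  refine ⟨⟨hδ0, fun x => by rw [hπ]; exact (hbounds x).2, hδπ, ⟨i1, by rw [hπ]; exact hi1u⟩,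
      ⟨⟨0, hn⟩, by rw [hδ]; simp⟩⟩, ?_, ?_⟩
  · intro x y hxy
    have hxy' : x ≤ y := by
      by_contra h
      push_neg at h
      exact absurd (hδm h.le) (not_le.mpr hxy)
    rw [hπ]; exact hFum hxy'
  · ext p
    simp only [credalCloud, Set.mem_setOf_eq]
    constructor
    · rintro ⟨hp, hcl⟩
      refine ⟨hp, fun i => ?_⟩
      have hsplit : (∑ j ∈ univ.filter (fun j => j ≤ i), p j) +
          (∑ j ∈ univ.filter (fun j => ¬ j ≤ i), p j) = 1 := by
        rw [Finset.sum_filter_add_sum_filter_not]; exact hp.2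
      constructor
      · -- Flow i ≤ S i
        have h2 := (hcl (Flow i) (hbounds i).1 (le_trans (hle i) (hbounds i).2)).1
        have hsub : univ.filter (fun x => ¬ x ≤ i) ⊆ univ.filter (fun x => Flow i ≤ δ x) := by
          intro x hx
          simp only [Finset.mem_filter, Finset.mem_univ, true_and, not_le] at hx ⊢
          have hx0 : x.val ≠ 0 := by have := Fin.lt_def.mp hx; omega
          rw [hδ, dif_neg hx0]
          exact hFlm (show i ≤ (⟨x.val - 1, _⟩ : Fin n) from
            Nat.le_sub_one_of_lt (Fin.lt_def.mp hx))
        have hmon := Finset.sum_le_sum_of_subset_of_nonneg hsub (fun x _ _ => (hp.1 x).1)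
        linarith
      · -- S i ≤ Fupp i
        have h1 := (hcl (Fupp i) (le_trans (hbounds i).1 (hle i)) (hbounds i).2).2
        have hsub : univ.filter (fun x => Fupp i < π x) ⊆ univ.filter (fun x => ¬ x ≤ i) := by
          intro x hx
          simp only [Finset.mem_filter, Finset.mem_univ, true_and, not_le] at hx ⊢
          rw [hπ] at hx
          by_contra h
          push_neg at h
          exact absurd (hFum h) (not_le.mpr hx)
        have hmon := Finset.sum_le_sum_of_subset_of_nonneg hsub (fun x _ _ => (hp.1 x).1)
        linarith
    · rintro ⟨hp, hpb⟩
      refine ⟨hp, fun α hα0 hα1 => ?_⟩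
      have hsplit : ∀ k : Fin n, (∑ j ∈ univ.filter (fun j => j ≤ k), p j) +
          (∑ j ∈ univ.filter (fun j => ¬ j ≤ k), p j) = 1 := by
        intro k
        rw [Finset.sum_filter_add_sum_filter_not]; exact hp.2
      constructor
      · -- sum over {α ≤ δ x} ≤ 1 - α
        set T := univ.filter (fun x => α ≤ δ x) with hT
        by_cases hTne : T.Nonempty
        · set i0 := T.min' hTne with hi0
          have hi0mem : α ≤ δ i0 := (Finset.mem_filter.mp (T.min'_mem hTne)).2
          by_cases h0 : i0.val = 0
          · have : δ i0 = 0 := by rw [hδ, dif_pos h0]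
            have hα : α = 0 := le_antisymm (this ▸ hi0mem) hα0
            have hsum : ∑ x ∈ T, p x ≤ ∑ x, p x :=
              Finset.sum_le_sum_of_subset_of_nonneg (Finset.filter_subset _ _)
                (fun x _ _ => (hp.1 x).1)
            rw [hα]
            rw [hp.2] at hsum
            linarith
          · have hkval : i0.val - 1 < n := lt_trans (Nat.sub_lt (Nat.pos_of_ne_zero h0)
              Nat.one_pos) i0.isLt
            set k : Fin n := ⟨i0.val - 1, hkval⟩ with hk
            have hαk : α ≤ Flow k := by
              rw [hδ, dif_neg h0] at hi0mem
              exact hi0mem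
            have hsub : T ⊆ univ.filter (fun x => ¬ x ≤ k) := by
              intro x hx
              simp only [Finset.mem_filter, Finset.mem_univ, true_and, not_le]
              have : i0 ≤ x := T.min'_le x hx
              rw [Fin.lt_def]
              exact lt_of_lt_of_le (Nat.sub_lt (Nat.pos_of_ne_zero h0) Nat.one_pos)
                (Fin.le_def.mp this)
            have hmon := Finset.sum_le_sum_of_subset_of_nonneg hsub (fun x _ _ => (hp.1 x).1)
            have hSk := (hpb k).1
            have := hsplit k
            linarith
        · rw [Finset.not_nonempty_iff_eq_empty] at hTne
          rw [hTne]
          simp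
          linarith
      · -- 1 - α ≤ sum over {α < π x}
        set T := univ.filter (fun x => α < π x) with hT
        by_cases hTne : T.Nonempty
        · set i0 := T.min' hTne with hi0
          have hi0mem : α < π i0 := (Finset.mem_filter.mp (T.min'_mem hTne)).2
          by_cases h0 : i0.val = 0
          · have hTuniv : T = univ := by
              rw [hT]
              apply Finset.filter_true_of_mem
              intro x _
              have : i0 ≤ x := by rw [Fin.le_def, h0]; exact Nat.zero_le _
              rw [hπ] at hi0mem ⊢
              exact lt_of_lt_of_le hi0mem (hFum this)
            rw [hTuniv, hp.2]
            linarith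
          · have hkval : i0.val - 1 < n := lt_trans (Nat.sub_lt (Nat.pos_of_ne_zero h0)
              Nat.one_pos) i0.isLt
            set k : Fin n := ⟨i0.val - 1, hkval⟩ with hk
            have hknotT : k ∉ T := by
              intro hkT
              have := T.min'_le k hkT
              rw [← hi0, Fin.le_def] at this
              simp only [hk] at this
              omega
            have hπk : π k ≤ α := by
              rw [hT, Finset.mem_filter] at hknotT
              push_neg at hknotT
              exact hknotT (Finset.mem_univ k)
            have hFk : Fupp k ≤ α := by rw [hπ] at hπk; exact hπk
            have hsub : univ.filter (fun x => ¬ x ≤ k) ⊆ T := by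
              intro x hx
              simp only [Finset.mem_filter, Finset.mem_univ, true_and, not_le] at hx
              rw [hT, Finset.mem_filter]
              refine ⟨Finset.mem_univ x, ?_⟩
              have hi0x : i0 ≤ x := by
                rw [Fin.le_def]
                have := Fin.lt_def.mp hx
                simp only [hk] at this
                omega
              rw [hπ] at hi0mem ⊢
              exact lt_of_lt_of_le hi0mem (hFum hi0x)
            have hmon := Finset.sum_le_sum_of_subset_of_nonneg hsub (fun x _ _ => (hp.1 x).1)
            have hSk := (hpb k).2
            have := hsplit k
            linarith
        · have hα : α = 1 := by
            have : π i1 = 1 := by rw [hπ]; exact hi1u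
            rw [Finset.not_nonempty_iff_eq_empty, hT, Finset.filter_eq_empty_iff] at hTne
            have := hTne (Finset.mem_univ i1)
            push_neg at this
            rw [hπ, hi1u] at this
            linarith
          rw [Finset.not_nonempty_iff_eq_empty] at hTne
          rw [hTne, hα]
          simp
end

section
/- Let (δ, π) be a comonotonic cloud on a finite set X, and let 0 = γ₀ < γ₁ < … < γ_M = 1 be the distinct elements of {0,1} ∪ δ(X) ∪ π(X). For j = 1, …, M set E_j = {x ∈ X : π(x) ≥ γ_j and δ(x) < γ_j}, and define the belief function Bel(A) = ∑_{j : E_j ⊆ A} (γ_j − γ_{j−1}) for A ⊆ X. Then the credal set of this belief function coincides with that of the cloud: {p : Bel(A) ≤ P(A) for all A ⊆ X} = 𝒫[δ,π]. In particular every comonotonic cloud is exactly representable by a random set. -/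
open Finset

attribute [local instance] Classical.propDecidable

variable {X : Type*}

/-- Predecessor index, definitionally matching the expression in the theorem. -/
private abbrev fpred {M : ℕ} (j : Fin (M + 1)) : Fin (M + 1) :=
  ⟨j.val - 1, lt_of_le_of_lt (Nat.sub_le _ _) j.isLt⟩

private lemma tel_aux (g : ℕ → ℝ) (M t : ℕ) (ht : t ≤ M) :
    ∑ n ∈ Finset.range (M + 1), (if n ≠ 0 ∧ n ≤ t then g n - g (n - 1) else 0)
      = g t - g 0 := by
  have hsub : Finset.range (t + 1) ⊆ Finset.range (M + 1) :=
    Finset.range_subset_range.mpr (by omega)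
  rw [← Finset.sum_subset hsub (by
    intro n hn hnt
    have h1 : n < M + 1 := Finset.mem_range.mp hn
    have h2 : ¬ n < t + 1 := fun hc => hnt (Finset.mem_range.mpr hc)
    have : ¬ (n ≤ t) := by omega
    simp [this])]
  rw [Finset.sum_range_succ']
  have h0 : (if (0:ℕ) ≠ 0 ∧ (0:ℕ) ≤ t then g 0 - g (0 - 1) else 0) = 0 := by simp
  rw [h0, add_zero]
  have hterm : ∀ i ∈ Finset.range t,
      (if i + 1 ≠ 0 ∧ i + 1 ≤ t then g (i + 1) - g (i + 1 - 1) else 0)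
        = g (i + 1) - g i := by
    intro i hi
    have : i + 1 ≤ t := Finset.mem_range.mp hi
    simp [this]
  rw [Finset.sum_congr rfl hterm, Finset.sum_range_sub g t]

private lemma tel_aux2 (g : ℕ → ℝ) (M t : ℕ) (ht1 : 1 ≤ t) (ht : t ≤ M) :
    ∑ n ∈ Finset.range (M + 1), (if n ≠ 0 ∧ t ≤ n then g n - g (n - 1) else 0)
      = g M - g (t - 1) := by
  have hsub : Finset.Ico t (M + 1) ⊆ Finset.range (M + 1) := by
    rw [Finset.range_eq_Ico]
    exact Finset.Ico_subset_Ico (Nat.zero_le t) le_rfl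
  rw [← Finset.sum_subset hsub (by
    intro n hn hnt
    have h2 : ¬ (t ≤ n) := by
      intro hc
      exact hnt (Finset.mem_Ico.mpr ⟨hc, Finset.mem_range.mp hn⟩)
    simp [h2])]
  have hterm : ∀ n ∈ Finset.Ico t (M + 1),
      (if n ≠ 0 ∧ t ≤ n then g n - g (n - 1) else 0) = g n - g (n - 1) := by
    intro n hn
    have h1 : t ≤ n := (Finset.mem_Ico.mp hn).1
    have : n ≠ 0 := by omega
    simp [this, h1]
  rw [Finset.sum_congr rfl hterm, Finset.sum_Ico_eq_sum_range]
  have hterm2 : ∀ i ∈ Finset.range (M + 1 - t),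
      g (t + i) - g (t + i - 1) = (fun i => g (t - 1 + i)) (i + 1) - (fun i => g (t - 1 + i)) i := by
    intro i _
    have e1 : t + i = t - 1 + (i + 1) := by omega
    have e2 : t + i - 1 = t - 1 + i := by omega
    rw [e2, e1]
  rw [Finset.sum_congr rfl hterm2, Finset.sum_range_sub (fun i => g (t - 1 + i)) (M + 1 - t)]
  have e3 : t - 1 + (M + 1 - t) = M := by omega
  have e4 : t - 1 + 0 = t - 1 := by omega
  rw [e3, e4]

private lemma tel1 {M : ℕ} (γ : Fin (M + 1) → ℝ) (t : Fin (M + 1)) :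
    ∑ k ∈ Finset.univ.filter (fun k : Fin (M + 1) => k.val ≠ 0 ∧ k ≤ t), (γ k - γ (fpred k))
      = γ t - γ 0 := by
  classical
  set g : ℕ → ℝ := fun n => γ ⟨min n M, Nat.lt_succ_of_le (Nat.min_le_right n M)⟩ with hg
  have hgj : ∀ j : Fin (M + 1), g j.val = γ j := by
    intro j
    have hj : min j.val M = j.val := Nat.min_eq_left (Nat.lt_succ_iff.mp j.isLt)
    simp only [hg]
    congr 1
    exact Fin.ext hj
  have hgp : ∀ j : Fin (M + 1), g (j.val - 1) = γ (fpred j) := by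
    intro j
    have h1 : j.val - 1 ≤ M := by have := Nat.lt_succ_iff.mp j.isLt; omega
    have hj : min (j.val - 1) M = j.val - 1 := Nat.min_eq_left h1
    simp only [hg]
    congr 1
    exact Fin.ext hj
  rw [Finset.sum_filter]
  have hterm : ∀ j ∈ Finset.univ, (if j.val ≠ 0 ∧ j ≤ t then γ j - γ (fpred j) else 0)
      = (fun n : ℕ => if n ≠ 0 ∧ n ≤ t.val then g n - g (n - 1) else 0) j.val := by
    intro j _
    by_cases hc : j.val ≠ 0 ∧ j ≤ t
    · have h2 : j.val ≠ 0 ∧ j.val ≤ t.val := ⟨hc.1, hc.2⟩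
      simp [hc, h2, hgj j, hgp j]
    · have h2 : ¬(j.val ≠ 0 ∧ j.val ≤ t.val) := fun hx => hc ⟨hx.1, hx.2⟩
      rw [if_neg hc]; exact (if_neg h2).symm
  rw [Finset.sum_congr rfl hterm,
    Fin.sum_univ_eq_sum_range (fun n : ℕ => if n ≠ 0 ∧ n ≤ t.val then g n - g (n - 1) else 0)
      (M + 1)]
  rw [tel_aux g M t.val (Nat.lt_succ_iff.mp t.isLt)]
  rw [hgj t]
  congr 1

private lemma tel2 {M : ℕ} (γ : Fin (M + 1) → ℝ) (t : Fin (M + 1)) (ht : t.val ≠ 0) :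
    ∑ k ∈ Finset.univ.filter (fun k : Fin (M + 1) => k.val ≠ 0 ∧ t ≤ k), (γ k - γ (fpred k))
      = γ (Fin.last M) - γ (fpred t) := by
  classical
  set g : ℕ → ℝ := fun n => γ ⟨min n M, Nat.lt_succ_of_le (Nat.min_le_right n M)⟩ with hg
  have hgj : ∀ j : Fin (M + 1), g j.val = γ j := by
    intro j
    have hj : min j.val M = j.val := Nat.min_eq_left (Nat.lt_succ_iff.mp j.isLt)
    simp only [hg]
    congr 1
    exact Fin.ext hj
  have hgp : ∀ j : Fin (M + 1), g (j.val - 1) = γ (fpred j) := by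
    intro j
    have h1 : j.val - 1 ≤ M := by have := Nat.lt_succ_iff.mp j.isLt; omega
    have hj : min (j.val - 1) M = j.val - 1 := Nat.min_eq_left h1
    simp only [hg]
    congr 1
    exact Fin.ext hj
  rw [Finset.sum_filter]
  have hterm : ∀ j ∈ Finset.univ, (if j.val ≠ 0 ∧ t ≤ j then γ j - γ (fpred j) else 0)
      = (fun n : ℕ => if n ≠ 0 ∧ t.val ≤ n then g n - g (n - 1) else 0) j.val := by
    intro j _
    by_cases hc : j.val ≠ 0 ∧ t ≤ j
    · have h2 : j.val ≠ 0 ∧ t.val ≤ j.val := ⟨hc.1, hc.2⟩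
      simp [hc, h2, hgj j, hgp j]
    · have h2 : ¬(j.val ≠ 0 ∧ t.val ≤ j.val) := fun hx => hc ⟨hx.1, hx.2⟩
      rw [if_neg hc]; exact (if_neg h2).symm
  rw [Finset.sum_congr rfl hterm,
    Fin.sum_univ_eq_sum_range (fun n : ℕ => if n ≠ 0 ∧ t.val ≤ n then g n - g (n - 1) else 0)
      (M + 1)]
  rw [tel_aux2 g M t.val (by omega) (Nat.lt_succ_iff.mp t.isLt)]
  rw [hgp t]
  congr 1
  exact hgj (Fin.last M)

private lemma eps_helper {c d S : ℝ} (hc0 : 0 ≤ c) (hd1 : d ≤ 1) (hcd : c < d)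
    (hS : ∀ α : ℝ, 0 ≤ α → α ≤ 1 → c < α → α < d → 1 - α ≤ S) : 1 - c ≤ S := by
  by_contra hcon
  push_neg at hcon
  have h1 := min_le_left (d - c) (1 - c - S)
  have h2 := min_le_right (d - c) (1 - c - S)
  have h3 : 0 < min (d - c) (1 - c - S) := lt_min (by linarith) (by linarith)
  have h4 := hS (c + min (d - c) (1 - c - S) / 2) (by linarith) (by linarith) (by linarith)
    (by linarith)
  linarith

/-- let `(δ, π)` be a comonotonic cloud and let
`0 = γ₀ < γ₁ < … < γ_M = 1` enumerate the distinct values of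
`{0,1} ∪ δ(X) ∪ π(X)`. The random set with focal sets
`E_j = {x | π x ≥ γ_j ∧ δ x < γ_j}` and masses `γ_j - γ_{j-1}` (for
`j = 1, …, M`) has belief function `Bel`, and its credal set coincides with the
credal set of the cloud. -/
theorem comonotonic_cloud_eq_random_set [Fintype X] (δ π : X → ℝ)
    (h : IsCloud δ π) (hcom : Comonotonic δ π)
    {M : ℕ} (γ : Fin (M + 1) → ℝ) (hγ : StrictMono γ)
    (hrange : Set.range γ = {0, 1} ∪ Set.range δ ∪ Set.range π)
    (Bel : Finset X → ℝ)
    (hBel : ∀ A : Finset X, Bel A =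
      ∑ j ∈ univ.filter (fun j : Fin (M + 1) => j.val ≠ 0 ∧
          univ.filter (fun x => γ j ≤ π x ∧ δ x < γ j) ⊆ A),
        (γ j - γ ⟨j.val - 1, lt_of_le_of_lt (Nat.sub_le _ _) j.isLt⟩)) :
    {p : X → ℝ | IsProbDist p ∧ ∀ A : Finset X, Bel A ≤ ∑ x ∈ A, p x} =
      credalCloud δ π := by
  classical
  obtain ⟨hδ0, hπ1, hδπ, -, -⟩ := h
  have hBel' : ∀ A : Finset X, Bel A =
      ∑ j ∈ univ.filter (fun j : Fin (M + 1) => j.val ≠ 0 ∧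
          univ.filter (fun x => γ j ≤ π x ∧ δ x < γ j) ⊆ A),
        (γ j - γ (fpred j)) := hBel
  have hmono : Monotone γ := hγ.monotone
  have hγmem : ∀ k, 0 ≤ γ k ∧ γ k ≤ 1 := by
    intro k
    have hk : γ k ∈ Set.range γ := ⟨k, rfl⟩
    rw [hrange] at hk
    rcases hk with (hk | ⟨x, hx⟩) | ⟨x, hx⟩
    · rcases hk with hk | hk
      · rw [hk]; norm_num
      · rw [Set.mem_singleton_iff] at hk
        rw [hk]; norm_num
    · rw [← hx]; exact ⟨hδ0 x, le_trans (hδπ x) (hπ1 x)⟩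
    · rw [← hx]; exact ⟨le_trans (hδ0 x) (hδπ x), hπ1 x⟩
  have hγ0 : γ 0 = 0 := by
    have h0 : (0 : ℝ) ∈ Set.range γ := by
      rw [hrange]; exact Or.inl (Or.inl (by norm_num))
    obtain ⟨i, hi⟩ := h0
    have h1 : γ 0 ≤ γ i := hmono (Fin.zero_le i)
    have h2 := (hγmem 0).1
    rw [hi] at h1
    linarith
  have hγlast : γ (Fin.last M) = 1 := by
    have h0 : (1 : ℝ) ∈ Set.range γ := by
      rw [hrange]; exact Or.inl (Or.inl (by norm_num))
    obtain ⟨i, hi⟩ := h0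
    have h1 : γ i ≤ γ (Fin.last M) := hmono (Fin.le_last i)
    have h2 := (hγmem (Fin.last M)).2
    rw [hi] at h1
    linarith
  have hδgrid : ∀ x, ∃ k, γ k = δ x := by
    intro x
    have : δ x ∈ Set.range γ := by rw [hrange]; exact Or.inl (Or.inr ⟨x, rfl⟩)
    exact this
  have hπgrid : ∀ x, ∃ k, γ k = π x := by
    intro x
    have : π x ∈ Set.range γ := by rw [hrange]; exact Or.inr ⟨x, rfl⟩
    exact this
  have hmnonneg : ∀ j : Fin (M + 1), 0 ≤ γ j - γ (fpred j) := by
    intro j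
    have : fpred j ≤ j := by
      rw [Fin.le_def]
      exact Nat.sub_le _ _
    linarith [hmono this]
  ext p
  simp only [Set.mem_setOf_eq, credalCloud]
  constructor
  · -- Bel-dominating implies cloud credal set
    rintro ⟨hp, hmain⟩
    refine ⟨hp, ?_⟩
    have hp0 : ∀ x, 0 ≤ p x := fun x => (hp.1 x).1
    have hps : ∑ x, p x = 1 := hp.2
    -- constraint (a)
    have conA : ∀ j : Fin (M + 1),
        ∑ x ∈ univ.filter (fun x => γ j ≤ δ x), p x ≤ 1 - γ j := by
      intro j
      by_cases hj : j.val = 0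
      · have hj' : γ j = 0 := by
          have hje : j = 0 := Fin.ext (by simpa using hj)
          rw [hje, hγ0]
        have hle : ∑ x ∈ univ.filter (fun x => γ j ≤ δ x), p x ≤ 1 := by
          rw [← hps]
          exact Finset.sum_le_sum_of_subset_of_nonneg (Finset.filter_subset _ _)
            (fun i _ _ => hp0 i)
        linarith
      · have h1 : ∑ k ∈ univ.filter (fun k : Fin (M + 1) => k.val ≠ 0 ∧ k ≤ j),
            (γ k - γ (fpred k)) ≤ Bel (univ.filter (fun x => δ x < γ j)) := by
          rw [hBel']
          apply Finset.sum_le_sum_of_subset_of_nonneg _ (fun k _ _ => hmnonneg k)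
          intro k hk
          simp only [mem_filter, mem_univ, true_and] at hk ⊢
          refine ⟨hk.1, fun x hx => ?_⟩
          simp only [mem_filter, mem_univ, true_and] at hx ⊢
          exact lt_of_lt_of_le hx.2 (hmono hk.2)
        have h2 := tel1 γ j
        rw [hγ0] at h2
        have h3 := hmain (univ.filter (fun x => δ x < γ j))
        have h4 : ∑ x ∈ univ.filter (fun x => γ j ≤ δ x), p x
            + ∑ x ∈ univ.filter (fun x => δ x < γ j), p x = 1 := by
          rw [← hps]
          have h5 := Finset.sum_filter_add_sum_filter_not univ (fun x => γ j ≤ δ x) p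
          simpa [not_le] using h5
        linarith
    -- constraint (b)
    have conB : ∀ j : Fin (M + 1), j.val ≠ 0 →
        1 - γ (fpred j) ≤ ∑ x ∈ univ.filter (fun x => γ j ≤ π x), p x := by
      intro j hj0
      have h1 : ∑ k ∈ univ.filter (fun k : Fin (M + 1) => k.val ≠ 0 ∧ j ≤ k),
          (γ k - γ (fpred k)) ≤ Bel (univ.filter (fun x => γ j ≤ π x)) := by
        rw [hBel']
        apply Finset.sum_le_sum_of_subset_of_nonneg _ (fun k _ _ => hmnonneg k)
        intro k hk
        simp only [mem_filter, mem_univ, true_and] at hk ⊢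
        refine ⟨hk.1, fun x hx => ?_⟩
        simp only [mem_filter, mem_univ, true_and] at hx ⊢
        exact le_trans (hmono hk.2) hx.1
      have h2 := tel2 γ j hj0
      rw [hγlast] at h2
      have h3 := hmain (univ.filter (fun x => γ j ≤ π x))
      linarith
    -- now prove the credal cloud constraints for every α
    intro α hα0 hα1
    constructor
    · -- upper constraint via δ
      have hSne : (univ.filter (fun k : Fin (M + 1) => α ≤ γ k)).Nonempty := by
        refine ⟨Fin.last M, ?_⟩
        simp only [mem_filter, mem_univ, true_and]
        rw [hγlast]; exact hα1
      have hjmem := Finset.min'_mem _ hSne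
      have hjγ : α ≤ γ ((univ.filter (fun k : Fin (M + 1) => α ≤ γ k)).min' hSne) :=
        (Finset.mem_filter.mp hjmem).2
      have hjle : ∀ k, α ≤ γ k →
          (univ.filter (fun k : Fin (M + 1) => α ≤ γ k)).min' hSne ≤ k := by
        intro k hk
        exact Finset.min'_le _ k (by simp only [mem_filter, mem_univ, true_and]; exact hk)
      have hfeq : univ.filter (fun x => α ≤ δ x)
          = univ.filter (fun x => γ ((univ.filter
              (fun k : Fin (M + 1) => α ≤ γ k)).min' hSne) ≤ δ x) := by
        apply Finset.filter_congr
        intro x _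
        constructor
        · intro hx
          obtain ⟨k, hk⟩ := hδgrid x
          have hk' : α ≤ γ k := by rw [hk]; exact hx
          calc γ _ ≤ γ k := hmono (hjle k hk')
          _ = δ x := hk
        · intro hx
          exact le_trans hjγ hx
      rw [hfeq]
      have h1 := conA ((univ.filter (fun k : Fin (M + 1) => α ≤ γ k)).min' hSne)
      linarith
    · -- lower constraint via π
      rcases Finset.eq_empty_or_nonempty
          (univ.filter (fun k : Fin (M + 1) => α < γ k)) with hS | hSne
      · have h1 : ¬ α < γ (Fin.last M) := by
          intro hc
          have hmem : Fin.last M ∈ univ.filter (fun k : Fin (M + 1) => α < γ k) := by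
            simp only [mem_filter, mem_univ, true_and]; exact hc
          rw [hS] at hmem
          exact absurd hmem (Finset.notMem_empty _)
        rw [hγlast] at h1
        push_neg at h1
        have h2 : (0:ℝ) ≤ ∑ x ∈ univ.filter (fun x => α < π x), p x :=
          Finset.sum_nonneg (fun i _ => hp0 i)
        linarith
      · have hjmem := Finset.min'_mem _ hSne
        have hjγ : α < γ ((univ.filter (fun k : Fin (M + 1) => α < γ k)).min' hSne) :=
          (Finset.mem_filter.mp hjmem).2
        have hjle : ∀ k, α < γ k →
            (univ.filter (fun k : Fin (M + 1) => α < γ k)).min' hSne ≤ k := by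
          intro k hk
          exact Finset.min'_le _ k (by simp only [mem_filter, mem_univ, true_and]; exact hk)
        have hj0 : ((univ.filter (fun k : Fin (M + 1) => α < γ k)).min' hSne).val ≠ 0 := by
          intro hc
          have hje : (univ.filter (fun k : Fin (M + 1) => α < γ k)).min' hSne = 0 :=
            Fin.ext (by simpa using hc)
          rw [hje, hγ0] at hjγ
          linarith
        have hpred : γ (fpred ((univ.filter
            (fun k : Fin (M + 1) => α < γ k)).min' hSne)) ≤ α := by
          by_contra hc
          push_neg at hc
          have h1 := hjle _ hc
          rw [Fin.le_def] at h1
          simp only [fpred] at h1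
          omega
        have hfeq : univ.filter (fun x => α < π x)
            = univ.filter (fun x => γ ((univ.filter
                (fun k : Fin (M + 1) => α < γ k)).min' hSne) ≤ π x) := by
          apply Finset.filter_congr
          intro x _
          constructor
          · intro hx
            obtain ⟨k, hk⟩ := hπgrid x
            have hk' : α < γ k := by rw [hk]; exact hx
            calc γ _ ≤ γ k := hmono (hjle k hk')
            _ = π x := hk
          · intro hx
            exact lt_of_lt_of_le hjγ hx
        rw [hfeq]
        have h1 := conB _ hj0
        linarith
  · -- cloud credal set implies Bel-dominating
    rintro ⟨hp, hcred⟩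
    refine ⟨hp, ?_⟩
    have hp0 : ∀ x, 0 ≤ p x := fun x => (hp.1 x).1
    have hps : ∑ x, p x = 1 := hp.2
    have conA : ∀ j : Fin (M + 1),
        ∑ x ∈ univ.filter (fun x => γ j ≤ δ x), p x ≤ 1 - γ j :=
      fun j => (hcred (γ j) (hγmem j).1 (hγmem j).2).1
    have conB : ∀ j : Fin (M + 1), j.val ≠ 0 →
        1 - γ (fpred j) ≤ ∑ x ∈ univ.filter (fun x => γ j ≤ π x), p x := by
      intro j hj0
      have hlt : γ (fpred j) < γ j := by
        apply hγ
        rw [Fin.lt_def]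
        simp only [fpred]
        omega
      apply eps_helper (hγmem (fpred j)).1 (hγmem j).2 hlt
      intro α hα0 hα1 hcα hαd
      have h2 := (hcred α hα0 hα1).2
      have hfeq : univ.filter (fun x => α < π x)
          = univ.filter (fun x => γ j ≤ π x) := by
        apply Finset.filter_congr
        intro x _
        constructor
        · intro hx
          obtain ⟨k, hk⟩ := hπgrid x
          have hk1 : γ (fpred j) < γ k := by rw [hk]; linarith
          have hk2 : fpred j < k := by
            by_contra hc2
            push_neg at hc2
            have := hmono hc2
            linarith
          have hk3 : j ≤ k := by
            rw [Fin.lt_def] at hk2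
            simp only [fpred] at hk2
            rw [Fin.le_def]
            omega
          calc γ j ≤ γ k := hmono hk3
          _ = π x := hk
        · intro hx
          linarith
      rw [hfeq] at h2
      exact h2
    -- the key induction
    have keyL : ∀ J : Finset (Fin (M + 1)), ∀ A : Finset X, ∀ hne : J.Nonempty,
        (∀ j ∈ J, j.val ≠ 0) →
        (∀ j ∈ J, univ.filter (fun x => γ j ≤ π x ∧ δ x < γ j) ⊆ A) →
        ∑ x ∈ univ.filter (fun x => γ (J.min' hne) ≤ π x), p x - (1 - γ (J.min' hne))
          + ∑ j ∈ J.erase (J.min' hne), (γ j - γ (fpred j))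
          ≤ ∑ x ∈ A ∩ univ.filter (fun x => γ (J.min' hne) ≤ π x), p x := by
      intro J
      induction J using Finset.strongInduction with
      | _ J IH =>
        intro A hne h0 hsub
        have hlJ : J.min' hne ∈ J := J.min'_mem hne
        have hl0 : (J.min' hne).val ≠ 0 := h0 _ hlJ
        have hEl : univ.filter (fun x => γ (J.min' hne) ≤ π x ∧ δ x < γ (J.min' hne)) ⊆ A :=
          hsub _ hlJ
        have hElBl : univ.filter (fun x => γ (J.min' hne) ≤ π x ∧ δ x < γ (J.min' hne))
            = univ.filter (fun x => γ (J.min' hne) ≤ π x)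
              \ univ.filter (fun x => γ (J.min' hne) ≤ δ x) := by
          ext x
          simp only [mem_filter, mem_univ, true_and, mem_sdiff, not_le]
        have hDlBl : univ.filter (fun x => γ (J.min' hne) ≤ δ x)
            ⊆ univ.filter (fun x => γ (J.min' hne) ≤ π x) := by
          intro x hx
          simp only [mem_filter, mem_univ, true_and] at hx ⊢
          exact le_trans hx (hδπ x)
        have hPEl : ∑ x ∈ univ.filter
              (fun x => γ (J.min' hne) ≤ π x ∧ δ x < γ (J.min' hne)), p x
            = ∑ x ∈ univ.filter (fun x => γ (J.min' hne) ≤ π x), p x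
              - ∑ x ∈ univ.filter (fun x => γ (J.min' hne) ≤ δ x), p x := by
          rw [hElBl]
          exact Finset.sum_sdiff_eq_sub hDlBl
        rcases Finset.eq_empty_or_nonempty (J.erase (J.min' hne)) with hJ' | hJ'
        · rw [hJ', Finset.sum_empty]
          have h5 : ∑ x ∈ univ.filter
                (fun x => γ (J.min' hne) ≤ π x ∧ δ x < γ (J.min' hne)), p x
              ≤ ∑ x ∈ A ∩ univ.filter (fun x => γ (J.min' hne) ≤ π x), p x := by
            apply Finset.sum_le_sum_of_subset_of_nonneg _ (fun i _ _ => hp0 i)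
            intro x hx
            have hx' := hx
            simp only [mem_filter, mem_univ, true_and] at hx'
            refine Finset.mem_inter.mpr ⟨hEl hx, ?_⟩
            simp only [mem_filter, mem_univ, true_and]
            exact hx'.1
          have h6 := conA (J.min' hne)
          linarith
        · have hl'J : (J.erase (J.min' hne)).min' hJ' ∈ J :=
            Finset.mem_of_mem_erase ((J.erase (J.min' hne)).min'_mem hJ')
          have hl'0 : ((J.erase (J.min' hne)).min' hJ').val ≠ 0 := h0 _ hl'J
          have hll' : J.min' hne < (J.erase (J.min' hne)).min' hJ' :=
            lt_of_le_of_ne (J.min'_le _ hl'J)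
              (Ne.symm (Finset.ne_of_mem_erase ((J.erase (J.min' hne)).min'_mem hJ')))
          have hγll' : γ (J.min' hne) ≤ γ ((J.erase (J.min' hne)).min' hJ') :=
            hmono (le_of_lt hll')
          have hlpred : γ (J.min' hne) ≤ γ (fpred ((J.erase (J.min' hne)).min' hJ')) := by
            apply hmono
            rw [Fin.le_def]
            have hv := Fin.lt_def.mp hll'
            simp only [fpred]
            omega
          have IH' := IH (J.erase (J.min' hne)) (Finset.erase_ssubset hlJ) A hJ'
            (fun j hj => h0 j (Finset.mem_of_mem_erase hj))
            (fun j hj => hsub j (Finset.mem_of_mem_erase hj))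
          have hsum : ∑ j ∈ J.erase (J.min' hne), (γ j - γ (fpred j))
              = (γ ((J.erase (J.min' hne)).min' hJ')
                  - γ (fpred ((J.erase (J.min' hne)).min' hJ')))
                + ∑ j ∈ (J.erase (J.min' hne)).erase ((J.erase (J.min' hne)).min' hJ'),
                    (γ j - γ (fpred j)) :=
            (Finset.add_sum_erase _ _ ((J.erase (J.min' hne)).min'_mem hJ')).symm
          have hBl'Bl : univ.filter (fun x => γ ((J.erase (J.min' hne)).min' hJ') ≤ π x)
              ⊆ univ.filter (fun x => γ (J.min' hne) ≤ π x) := by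
            intro x hx
            simp only [mem_filter, mem_univ, true_and] at hx ⊢
            exact le_trans hγll' hx
          have hii : ∑ x ∈ A ∩ univ.filter
                (fun x => γ ((J.erase (J.min' hne)).min' hJ') ≤ π x), p x
              + ∑ x ∈ (univ.filter
                  (fun x => γ (J.min' hne) ≤ π x ∧ δ x < γ (J.min' hne)))
                \ (univ.filter (fun x => γ ((J.erase (J.min' hne)).min' hJ') ≤ π x)), p x
              ≤ ∑ x ∈ A ∩ univ.filter (fun x => γ (J.min' hne) ≤ π x), p x := by
            rw [← Finset.sum_union (by
              rw [Finset.disjoint_left]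
              intro x hx1 hx2
              exact (Finset.mem_sdiff.mp hx2).2 (Finset.mem_inter.mp hx1).2)]
            apply Finset.sum_le_sum_of_subset_of_nonneg _ (fun i _ _ => hp0 i)
            intro x hx
            rcases Finset.mem_union.mp hx with hx | hx
            · rcases Finset.mem_inter.mp hx with ⟨hA, hB⟩
              exact Finset.mem_inter.mpr ⟨hA, hBl'Bl hB⟩
            · rcases Finset.mem_sdiff.mp hx with ⟨hE, -⟩
              have hE' := hE
              simp only [mem_filter, mem_univ, true_and] at hE'
              refine Finset.mem_inter.mpr ⟨hEl hE, ?_⟩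
              simp only [mem_filter, mem_univ, true_and]
              exact hE'.1
          have hiii : ∑ x ∈ (univ.filter
                (fun x => γ (J.min' hne) ≤ π x ∧ δ x < γ (J.min' hne)))
                \ (univ.filter (fun x => γ ((J.erase (J.min' hne)).min' hJ') ≤ π x)), p x
              = ∑ x ∈ univ.filter
                  (fun x => γ (J.min' hne) ≤ π x ∧ δ x < γ (J.min' hne)), p x
                - ∑ x ∈ (univ.filter
                    (fun x => γ (J.min' hne) ≤ π x ∧ δ x < γ (J.min' hne)))
                  ∩ (univ.filter
                    (fun x => γ ((J.erase (J.min' hne)).min' hJ') ≤ π x)), p x := by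
            rw [← Finset.sdiff_inter_self_left]
            exact Finset.sum_sdiff_eq_sub Finset.inter_subset_left
          have hv : (univ.filter
                (fun x => γ (J.min' hne) ≤ π x ∧ δ x < γ (J.min' hne)))
                ∩ (univ.filter (fun x => γ ((J.erase (J.min' hne)).min' hJ') ≤ π x))
              = (univ.filter (fun x => γ ((J.erase (J.min' hne)).min' hJ') ≤ π x))
                \ (univ.filter (fun x => γ (J.min' hne) ≤ δ x)) := by
            ext x
            simp only [mem_inter, mem_sdiff, mem_filter, mem_univ, true_and, not_le]
            constructor
            · rintro ⟨⟨h1, h2⟩, h3⟩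
              exact ⟨h3, h2⟩
            · rintro ⟨h3, h2⟩
              exact ⟨⟨le_trans hγll' h3, h2⟩, h3⟩
          have hPv : ∑ x ∈ (univ.filter
                (fun x => γ (J.min' hne) ≤ π x ∧ δ x < γ (J.min' hne)))
                ∩ (univ.filter (fun x => γ ((J.erase (J.min' hne)).min' hJ') ≤ π x)), p x
              = ∑ x ∈ univ.filter
                  (fun x => γ ((J.erase (J.min' hne)).min' hJ') ≤ π x), p x
                - ∑ x ∈ (univ.filter
                    (fun x => γ ((J.erase (J.min' hne)).min' hJ') ≤ π x))
                  ∩ (univ.filter (fun x => γ (J.min' hne) ≤ δ x)), p x := by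
            rw [hv, ← Finset.sdiff_inter_self_left]
            exact Finset.sum_sdiff_eq_sub Finset.inter_subset_left
          have hPvi : ∑ x ∈ (univ.filter (fun x => γ (J.min' hne) ≤ δ x))
                \ (univ.filter (fun x => γ ((J.erase (J.min' hne)).min' hJ') ≤ π x)), p x
              = ∑ x ∈ univ.filter (fun x => γ (J.min' hne) ≤ δ x), p x
                - ∑ x ∈ (univ.filter (fun x => γ (J.min' hne) ≤ δ x))
                  ∩ (univ.filter
                    (fun x => γ ((J.erase (J.min' hne)).min' hJ') ≤ π x)), p x := by
            rw [← Finset.sdiff_inter_self_left]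
            exact Finset.sum_sdiff_eq_sub Finset.inter_subset_left
          have hcomm : ∑ x ∈ (univ.filter
                (fun x => γ ((J.erase (J.min' hne)).min' hJ') ≤ π x))
                ∩ (univ.filter (fun x => γ (J.min' hne) ≤ δ x)), p x
              = ∑ x ∈ (univ.filter (fun x => γ (J.min' hne) ≤ δ x))
                ∩ (univ.filter
                  (fun x => γ ((J.erase (J.min' hne)).min' hJ') ≤ π x)), p x := by
            rw [Finset.inter_comm]
          have hvii : ∑ x ∈ (univ.filter (fun x => γ (J.min' hne) ≤ δ x))
                \ (univ.filter (fun x => γ ((J.erase (J.min' hne)).min' hJ') ≤ π x)), p x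
              ≤ γ (fpred ((J.erase (J.min' hne)).min' hJ')) - γ (J.min' hne) := by
            rcases Finset.eq_empty_or_nonempty
                ((univ.filter (fun x => γ (J.min' hne) ≤ δ x))
                  \ (univ.filter
                    (fun x => γ ((J.erase (J.min' hne)).min' hJ') ≤ π x))) with he | ⟨x, hx⟩
            · rw [he, Finset.sum_empty]
              linarith
            · obtain ⟨hxD, hxB⟩ := Finset.mem_sdiff.mp hx
              simp only [mem_filter, mem_univ, true_and] at hxD hxB
              have hBD : univ.filter (fun x => γ ((J.erase (J.min' hne)).min' hJ') ≤ π x)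
                  ⊆ univ.filter (fun x => γ (J.min' hne) ≤ δ x) := by
                intro y hy
                simp only [mem_filter, mem_univ, true_and] at hy ⊢
                by_contra hc
                push_neg at hc
                exact hxB (le_trans hy (hcom y x (lt_of_lt_of_le hc hxD)))
              have hUB : ∑ x ∈ (univ.filter (fun x => γ (J.min' hne) ≤ δ x))
                    \ (univ.filter
                      (fun x => γ ((J.erase (J.min' hne)).min' hJ') ≤ π x)), p x
                  + ∑ x ∈ univ.filter
                      (fun x => γ ((J.erase (J.min' hne)).min' hJ') ≤ π x), p x
                  ≤ ∑ x ∈ univ.filter (fun x => γ (J.min' hne) ≤ δ x), p x := by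
                rw [← Finset.sum_union (by
                  rw [Finset.disjoint_left]
                  intro y hy hy'
                  exact (Finset.mem_sdiff.mp hy).2 hy')]
                apply Finset.sum_le_sum_of_subset_of_nonneg _ (fun i _ _ => hp0 i)
                intro y hy
                rcases Finset.mem_union.mp hy with hy | hy
                · exact (Finset.mem_sdiff.mp hy).1
                · exact hBD hy
              have h6 := conA (J.min' hne)
              have h7 := conB _ hl'0
              linarith
          rw [hsum]
          linarith [IH', hii, hiii, hPEl, hPv, hPvi, hcomm, hvii]
    -- conclusion
    intro A
    rw [hBel' A]
    rcases Finset.eq_empty_or_nonempty (univ.filter (fun j : Fin (M + 1) => j.val ≠ 0 ∧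
        univ.filter (fun x => γ j ≤ π x ∧ δ x < γ j) ⊆ A)) with hJ | hJne
    · rw [hJ, Finset.sum_empty]
      exact Finset.sum_nonneg (fun i _ => hp0 i)
    · have h0J : ∀ j ∈ univ.filter (fun j : Fin (M + 1) => j.val ≠ 0 ∧
          univ.filter (fun x => γ j ≤ π x ∧ δ x < γ j) ⊆ A), j.val ≠ 0 :=
        fun j hj => ((Finset.mem_filter.mp hj).2).1
      have hsubJ : ∀ j ∈ univ.filter (fun j : Fin (M + 1) => j.val ≠ 0 ∧
          univ.filter (fun x => γ j ≤ π x ∧ δ x < γ j) ⊆ A),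
          univ.filter (fun x => γ j ≤ π x ∧ δ x < γ j) ⊆ A :=
        fun j hj => ((Finset.mem_filter.mp hj).2).2
      have hk := keyL _ A hJne h0J hsubJ
      have hl0 := h0J _ (Finset.min'_mem _ hJne)
      have hb := conB _ hl0
      have hsum := (Finset.add_sum_erase _ (fun j : Fin (M + 1) => γ j - γ (fpred j))
        (Finset.min'_mem _ hJne)).symm
      have hPA : ∑ x ∈ A ∩ univ.filter (fun x =>
            γ ((univ.filter (fun j : Fin (M + 1) => j.val ≠ 0 ∧
              univ.filter (fun x => γ j ≤ π x ∧ δ x < γ j) ⊆ A)).min' hJne) ≤ π x), p x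
          ≤ ∑ x ∈ A, p x :=
        Finset.sum_le_sum_of_subset_of_nonneg Finset.inter_subset_left (fun i _ _ => hp0 i)
      rw [hsum]
      linarith [hk, hb, hPA]
end

section
/- Let (δ, π) be a cloud on a finite set X. For A ⊆ X define the possibility measure Π_π(A) = max_{x∈A} π(x) (with Π_π(∅) = 0) and the necessity measure N_π(A) = 1 − Π_π(X∖A), and define Π_{1−δ} and N_{1−δ} analogously from the possibility distribution x ↦ 1 − δ(x). Then every p ∈ 𝒫[δ,π] satisfies, for every event A ⊆ X: max(N_π(A), N_{1−δ}(A)) ≤ P(A) ≤ min(Π_π(A), Π_{1−δ}(A)). -/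
open Finset

attribute [local instance] Classical.propDecidable

variable {X : Type*}

/-- The possibility measure of an event `A` induced by a distribution `π`
(`sSup ∅ = 0` in `ℝ`, matching the convention `Π(∅) = 0`). -/
noncomputable def possM [Fintype X] (π : X → ℝ) (A : Finset X) : ℝ :=
  sSup (π '' ↑A)

/-- The necessity measure of an event `A` induced by a distribution `π`. -/
noncomputable def necM [Fintype X] (π : X → ℝ) (A : Finset X) : ℝ :=
  1 - possM π Aᶜ

lemma cloud_upper_bounds [Fintype X] (δ π : X → ℝ) (h : IsCloud δ π)
    (p : X → ℝ) (hp : p ∈ credalCloud δ π) (A : Finset X) :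
    ∑ x ∈ A, p x ≤ possM π A ∧ ∑ x ∈ A, p x ≤ possM (fun x => 1 - δ x) A := by
  obtain ⟨hδ0, hπ1, hδπ, -, -⟩ := h
  obtain ⟨⟨hp0, hps⟩, hcred⟩ := hp
  rcases A.eq_empty_or_nonempty with rfl | hA
  · simp [possM, Real.sSup_empty]
  constructor
  · obtain ⟨x₁, hx₁A, hx₁⟩ := A.exists_max_image π hA
    set α := π x₁ with hαdef
    have hα0 : 0 ≤ α := le_trans (hδ0 x₁) (hδπ x₁)
    have h2 := (hcred α hα0 (hπ1 x₁)).2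
    have hdisj : Disjoint A (univ.filter fun x => α < π x) := by
      rw [Finset.disjoint_left]
      intro x hxA hxf
      exact absurd (Finset.mem_filter.mp hxf).2 (not_lt.mpr (hx₁ x hxA))
    have hsum : ∑ x ∈ A, p x + ∑ x ∈ univ.filter (fun x => α < π x), p x ≤ 1 := by
      rw [← Finset.sum_union hdisj, ← hps]
      exact Finset.sum_le_sum_of_subset_of_nonneg (Finset.subset_univ _)
        (fun x _ _ => (hp0 x).1)
    have hle : ∑ x ∈ A, p x ≤ α := by linarith
    refine le_trans hle (le_csSup ?_ ⟨x₁, hx₁A, rfl⟩)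
    exact (A.finite_toSet.image π).bddAbove
  · obtain ⟨x₀, hx₀A, hx₀⟩ := A.exists_min_image δ hA
    set α := δ x₀ with hαdef
    have h1 := (hcred α (hδ0 x₀) (le_trans (hδπ x₀) (hπ1 x₀))).1
    have hle : ∑ x ∈ A, p x ≤ ∑ x ∈ univ.filter (fun x => α ≤ δ x), p x := by
      refine Finset.sum_le_sum_of_subset_of_nonneg ?_ (fun x _ _ => (hp0 x).1)
      intro x hxA
      exact Finset.mem_filter.mpr ⟨Finset.mem_univ x, hx₀ x hxA⟩
    have : ∑ x ∈ A, p x ≤ 1 - α := le_trans hle h1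
    refine le_trans this (le_csSup ?_ ⟨x₀, hx₀A, rfl⟩)
    exact (A.finite_toSet.image _).bddAbove

/-- every probability distribution in the credal set of a cloud
`(δ, π)` is bounded on every event by the necessity and possibility measures of
the two possibility distributions `π` and `1 - δ`. -/
theorem cloud_outer_approx_bounds [Fintype X] (δ π : X → ℝ) (h : IsCloud δ π)
    (p : X → ℝ) (hp : p ∈ credalCloud δ π) (A : Finset X) :
    max (necM π A) (necM (fun x => 1 - δ x) A) ≤ ∑ x ∈ A, p x ∧
    ∑ x ∈ A, p x ≤ min (possM π A) (possM (fun x => 1 - δ x) A) := by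
  have hc1 := cloud_upper_bounds δ π h p hp A
  have hc2 := cloud_upper_bounds δ π h p hp Aᶜ
  have hsc : ∑ x ∈ A, p x + ∑ x ∈ Aᶜ, p x = 1 := by
    rw [Finset.sum_add_sum_compl]; exact hp.1.2
  refine ⟨max_le ?_ ?_, le_min hc1.1 hc1.2⟩
  · have := hc2.1; unfold necM; linarith
  · have := hc2.2; unfold necM; linarith
end

section
/- Let (δ, π) be any cloud on a finite set X (not necessarily comonotonic), and let 0 = γ₀ < γ₁ < … < γ_M = 1 be the distinct elements of {0,1} ∪ δ(X) ∪ π(X). For j = 1, …, M set E_j = {x ∈ X : π(x) ≥ γ_j and δ(x) < γ_j}, and define the belief function Bel(A) = ∑_{j : E_j ⊆ A} (γ_j − γ_{j−1}) for A ⊆ X. Then the credal set of this belief function is an inner approximation of that of the cloud: {p : Bel(A) ≤ P(A) for all A ⊆ X} ⊆ 𝒫[δ,π]. -/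
open Finset

attribute [local instance] Classical.propDecidable

variable {X : Type*}

/-- Telescoping sum over an `Ioc` interval of naturals. -/
private lemma tele_sum (G : ℕ → ℝ) {a b : ℕ} (hab : a ≤ b) :
    ∑ i ∈ Finset.Ioc a b, (G i - G (i - 1)) = G b - G a := by
  induction b, hab using Nat.le_induction with
  | base => simp
  | succ b hab ih =>
      rw [Finset.sum_Ioc_succ_top hab, ih]
      have : b + 1 - 1 = b := rfl
      rw [this]; ring

/-- Rewriting a filtered sum over `Fin (M+1)` as a filtered sum over `range (M+1)`. -/
private lemma fin_filter_sum {M : ℕ} (γ : Fin (M + 1) → ℝ) (F : ℕ → ℝ)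
    (hF : ∀ j : Fin (M + 1), F j.val = γ j) (P : ℕ → Prop) (instP : DecidablePred P) :
    ∑ j ∈ univ.filter (fun j : Fin (M + 1) => P j.val),
      (γ j - γ ⟨j.val - 1, lt_of_le_of_lt (Nat.sub_le _ _) j.isLt⟩)
    = ∑ i ∈ @Finset.filter ℕ P instP (Finset.range (M + 1)), (F i - F (i - 1)) := by
  classical
  rw [Finset.filter_congr_decidable, Finset.sum_filter, Finset.sum_filter,
    ← Fin.sum_univ_eq_sum_range (fun i : ℕ => if P i then F i - F (i - 1) else 0)]
  apply Finset.sum_congr rfl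
  intro j _
  by_cases hj : P j.val
  · simp only [hj, if_true]
    have h1 : F j.val = γ j := hF j
    have h2 : F (j.val - 1) = γ ⟨j.val - 1, lt_of_le_of_lt (Nat.sub_le _ _) j.isLt⟩ :=
      hF ⟨j.val - 1, lt_of_le_of_lt (Nat.sub_le _ _) j.isLt⟩
    rw [h1, h2]
  · simp [hj]


/-- let `(δ, π)` be any cloud (not necessarily comonotonic), and
let `0 = γ₀ < γ₁ < … < γ_M = 1` enumerate the distinct values of
`{0,1} ∪ δ(X) ∪ π(X)`. The random set with focal sets
`E_j = {x | π x ≥ γ_j ∧ δ x < γ_j}` and masses `γ_j - γ_{j-1}` (for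
`j = 1, …, M`) has belief function `Bel`, and its credal set is an inner
approximation of the credal set of the cloud. -/
theorem cloud_random_set_inner_approx [Fintype X] (δ π : X → ℝ)
    (h : IsCloud δ π)
    {M : ℕ} (γ : Fin (M + 1) → ℝ) (hγ : StrictMono γ)
    (hrange : Set.range γ = {0, 1} ∪ Set.range δ ∪ Set.range π)
    (Bel : Finset X → ℝ)
    (hBel : ∀ A : Finset X, Bel A =
      ∑ j ∈ univ.filter (fun j : Fin (M + 1) => j.val ≠ 0 ∧
          univ.filter (fun x => γ j ≤ π x ∧ δ x < γ j) ⊆ A),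
        (γ j - γ ⟨j.val - 1, lt_of_le_of_lt (Nat.sub_le _ _) j.isLt⟩)) :
    {p : X → ℝ | IsProbDist p ∧ ∀ A : Finset X, Bel A ≤ ∑ x ∈ A, p x} ⊆
      credalCloud δ π := by
  classical
  rintro p ⟨hp, hpBel⟩
  obtain ⟨hδ0, hπ1, hδπ, -, -⟩ := h
  set G : ℕ → ℝ := fun n => γ ⟨min n M, Nat.lt_succ_of_le (Nat.min_le_right n M)⟩ with hGdef
  have hδmem : ∀ x, δ x ∈ Set.range γ := by
    intro x; rw [hrange]; exact Or.inl (Or.inr ⟨x, rfl⟩)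
  have hπmem : ∀ x, π x ∈ Set.range γ := by
    intro x; rw [hrange]; exact Or.inr ⟨x, rfl⟩
  have h0mem : (0 : ℝ) ∈ Set.range γ := by rw [hrange]; simp
  have h1mem : (1 : ℝ) ∈ Set.range γ := by rw [hrange]; simp
  have hγ01 : ∀ j, 0 ≤ γ j ∧ γ j ≤ 1 := by
    intro j
    have hmem : γ j ∈ ({0, 1} : Set ℝ) ∪ Set.range δ ∪ Set.range π := by
      rw [← hrange]; exact ⟨j, rfl⟩
    rcases hmem with ((h01 | h01) | ⟨x, hx⟩) | ⟨x, hx⟩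
    · rw [h01]; norm_num
    · rw [Set.mem_singleton_iff] at h01; rw [h01]; norm_num
    · rw [← hx]; exact ⟨hδ0 x, le_trans (hδπ x) (hπ1 x)⟩
    · rw [← hx]; exact ⟨le_trans (hδ0 x) (hδπ x), hπ1 x⟩
  have hγzero : γ 0 = 0 := by
    obtain ⟨j, hj⟩ := h0mem
    have h1 : γ 0 ≤ γ j := hγ.monotone (Fin.zero_le j)
    have h2 := (hγ01 0).1
    linarith
  have hγlast : γ (Fin.last M) = 1 := by
    obtain ⟨j, hj⟩ := h1mem
    have h1 : γ j ≤ γ (Fin.last M) := hγ.monotone (Fin.le_last j)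
    have h2 := (hγ01 (Fin.last M)).2
    linarith
  have hGM : G M = 1 := by
    have : (⟨min M M, Nat.lt_succ_of_le (Nat.min_le_right M M)⟩ : Fin (M + 1)) = Fin.last M :=
      Fin.ext (by simp)
    rw [hGdef]; simp only []; rw [this, hγlast]
  have hG0 : G 0 = 0 := by
    have : (⟨min 0 M, Nat.lt_succ_of_le (Nat.min_le_right 0 M)⟩ : Fin (M + 1)) = 0 :=
      Fin.ext (by simp)
    rw [hGdef]; simp only []; rw [this, hγzero]
  have hterm_nonneg : ∀ j : Fin (M + 1),
      0 ≤ γ j - γ ⟨j.val - 1, lt_of_le_of_lt (Nat.sub_le _ _) j.isLt⟩ := by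
    intro j
    have : γ ⟨j.val - 1, lt_of_le_of_lt (Nat.sub_le _ _) j.isLt⟩ ≤ γ j :=
      hγ.monotone (by rw [Fin.le_def]; exact Nat.sub_le _ _)
    linarith
  have hGF : ∀ j : Fin (M + 1), G j.val = γ j := by
    intro j
    have hjM := j.isLt
    rw [hGdef]; simp only []
    congr 1
    exact Fin.ext (by simp only []; omega)
  have hpnn : ∀ x, 0 ≤ p x := fun x => (hp.1 x).1
  have hpsum : ∑ x, p x = 1 := hp.2
  -- a generic lower bound for `Bel`
  have hBel_ge : ∀ (A : Finset X) (P : ℕ → Prop) (inst : DecidablePred P),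
      (∀ j : Fin (M + 1), P j.val → j.val ≠ 0 ∧
          univ.filter (fun x => γ j ≤ π x ∧ δ x < γ j) ⊆ A) →
      ∑ i ∈ @Finset.filter ℕ P inst (Finset.range (M + 1)), (G i - G (i - 1)) ≤ Bel A := by
    intro A P inst hPA
    rw [hBel A, ← fin_filter_sum γ G hGF P inst]
    apply Finset.sum_le_sum_of_subset_of_nonneg
    · intro j hj
      rw [Finset.mem_filter] at hj ⊢
      exact ⟨hj.1, hPA j hj.2⟩
    · intro j _ _
      exact hterm_nonneg j
  refine ⟨hp, ?_⟩
  intro α hα0 hα1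
  constructor
  · -- upper bound: sum over {δ ≥ α} ≤ 1 - α
    rcases eq_or_lt_of_le hα0 with hα | hαpos
    · have h1 : ∑ x ∈ univ.filter (fun x => α ≤ δ x), p x ≤ ∑ x, p x :=
        Finset.sum_le_sum_of_subset_of_nonneg (Finset.filter_subset _ _) (fun x _ _ => hpnn x)
      rw [hpsum] at h1
      linarith
    · have hne : (univ.filter (fun j : Fin (M + 1) => α ≤ γ j)).Nonempty :=
        ⟨Fin.last M, by simp [hγlast, hα1]⟩
      set m := (univ.filter (fun j : Fin (M + 1) => α ≤ γ j)).min' hne with hm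
      have hαγm : α ≤ γ m := by
        have := Finset.min'_mem _ hne
        rw [Finset.mem_filter] at this
        exact this.2
      have hmin : ∀ j, α ≤ γ j → m ≤ j := fun j hj =>
        Finset.min'_le _ _ (by rw [Finset.mem_filter]; exact ⟨Finset.mem_univ _, hj⟩)
      have hm0 : m.val ≠ 0 := by
        intro h0
        have : m = 0 := Fin.ext h0
        rw [this, hγzero] at hαγm
        linarith
      set A : Finset X := univ.filter (fun x => δ x < γ m) with hA
      have hBelA : γ m ≤ Bel A := by
        have := hBel_ge A (fun i => i ≠ 0 ∧ i ≤ m.val) inferInstance ?_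
        · have hfe : (Finset.range (M + 1)).filter (fun i => i ≠ 0 ∧ i ≤ m.val)
              = Finset.Ioc 0 m.val := by
            ext i
            have := m.isLt
            simp only [Finset.mem_filter, Finset.mem_range, Finset.mem_Ioc]
            omega
          rw [hfe] at this
          have this2 := this
          rw [tele_sum G (Nat.zero_le _), hG0] at this2
          have hGm : G m.val = γ m := by
            have := m.isLt
            rw [hGdef]; simp only []
            congr 1
            exact Fin.ext (by simp only []; omega)
          rw [hGm] at this2
          linarith
        · rintro j ⟨hj0, hjm⟩
          refine ⟨hj0, ?_⟩
          intro x hx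
          rw [Finset.mem_filter] at hx
          rw [hA, Finset.mem_filter]
          refine ⟨Finset.mem_univ _, lt_of_lt_of_le hx.2.2 ?_⟩
          exact hγ.monotone (by rw [Fin.le_def]; exact hjm)
      have hPA : γ m ≤ ∑ x ∈ A, p x := le_trans hBelA (hpBel A)
      have hsplit : ∑ x ∈ univ.filter (fun x => α ≤ δ x), p x + ∑ x ∈ A, p x = 1 := by
        rw [hA]
        have hcongr : univ.filter (fun x => δ x < γ m)
            = univ.filter (fun x => ¬ α ≤ δ x) := by
          apply Finset.filter_congr
          intro x _
          constructor
          · intro hlt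
            obtain ⟨k, hk⟩ := hδmem x
            rw [← hk] at hlt ⊢
            intro hle
            exact absurd (hγ.monotone (hmin k hle)) (not_le.mpr hlt)
          · intro hnle
            push_neg at hnle
            linarith
        rw [hcongr, Finset.sum_filter_add_sum_filter_not, hpsum]
      linarith
  · -- lower bound: 1 - α ≤ sum over {π > α}
    rcases eq_or_lt_of_le hα1 with hα | hαlt
    · rw [hα]
      simp only [sub_self]
      exact Finset.sum_nonneg (fun x _ => hpnn x)
    · have hne : (univ.filter (fun j : Fin (M + 1) => α < γ j)).Nonempty :=
        ⟨Fin.last M, by simp [hγlast, hαlt]⟩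
      set m := (univ.filter (fun j : Fin (M + 1) => α < γ j)).min' hne with hm
      have hαγm : α < γ m := by
        have := Finset.min'_mem _ hne
        rw [Finset.mem_filter] at this
        exact this.2
      have hmin : ∀ j, α < γ j → m ≤ j := fun j hj =>
        Finset.min'_le _ _ (by rw [Finset.mem_filter]; exact ⟨Finset.mem_univ _, hj⟩)
      have hm0 : m.val ≠ 0 := by
        intro h0
        have : m = 0 := Fin.ext h0
        rw [this, hγzero] at hαγm
        linarith
      have hpred : γ ⟨m.val - 1, lt_of_le_of_lt (Nat.sub_le _ _) m.isLt⟩ ≤ α := by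
        by_contra hc
        push_neg at hc
        have := hmin _ hc
        rw [Fin.le_def] at this
        simp only [] at this
        omega
      set A : Finset X := univ.filter (fun x => γ m ≤ π x) with hA
      have hBelA : 1 - γ ⟨m.val - 1, lt_of_le_of_lt (Nat.sub_le _ _) m.isLt⟩ ≤ Bel A := by
        have := hBel_ge A (fun i => i ≠ 0 ∧ m.val ≤ i) inferInstance ?_
        · have hfe : (Finset.range (M + 1)).filter (fun i => i ≠ 0 ∧ m.val ≤ i)
              = Finset.Ioc (m.val - 1) M := by
            ext i
            have := m.isLt
            simp only [Finset.mem_filter, Finset.mem_range, Finset.mem_Ioc]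
            omega
          have hmM : m.val - 1 ≤ M := le_trans (Nat.sub_le _ _) (Nat.lt_succ_iff.mp m.isLt)
          rw [hfe] at this
          have this2 := this
          rw [tele_sum G hmM, hGM] at this2
          have hGm : G (m.val - 1) = γ ⟨m.val - 1, lt_of_le_of_lt (Nat.sub_le _ _) m.isLt⟩ := by
            have := m.isLt
            rw [hGdef]; simp only []
            congr 1
            exact Fin.ext (by simp only []; omega)
          rw [hGm] at this2
          linarith
        · rintro j ⟨hj0, hjm⟩
          refine ⟨hj0, ?_⟩
          intro x hx
          rw [Finset.mem_filter] at hx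
          rw [hA, Finset.mem_filter]
          refine ⟨Finset.mem_univ _, le_trans ?_ hx.2.1⟩
          exact hγ.monotone (by rw [Fin.le_def]; exact hjm)
      have hPA : 1 - γ ⟨m.val - 1, lt_of_le_of_lt (Nat.sub_le _ _) m.isLt⟩ ≤ ∑ x ∈ A, p x :=
        le_trans hBelA (hpBel A)
      have hcongr : univ.filter (fun x => α < π x) = A := by
        rw [hA]
        apply Finset.filter_congr
        intro x _
        constructor
        · intro hlt
          obtain ⟨k, hk⟩ := hπmem x
          rw [← hk] at hlt ⊢
          exact hγ.monotone (hmin k hlt)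
        · intro hle
          linarith
      rw [hcongr]
      linarith
end

section
/- Let l, u : X → [0,1] be a probability interval on a finite set X with nonempty credal set 𝒫_L. Call a strict total order ≺ on X compatible if u(x) < l(y) implies x ≺ y, and call a compatible ≺ feasible if some p ∈ 𝒫_L is non-decreasing along ≺ (x ≺ y implies p(x) ≤ p(y)); at least one feasible order exists. For a feasible ≺ define π^≺(x) = max{ ∑_{y ⪯ x} p(y) : p ∈ 𝒫_L non-decreasing along ≺ } and δ^≺(x) = min{ ∑_{y ≺ x} p(y) : p ∈ 𝒫_L non-decreasing along ≺ } (where y ⪯ x means y ≺ x or y = x), and set π(x) = max over feasible ≺ of π^≺(x) and δ(x) = min over feasible ≺ of δ^≺(x). Then (δ, π) is a cloud on X and 𝒫_L ⊆ 𝒫[δ,π], i.e., the cloud outer-approximates the probability interval. -/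
open Finset

attribute [local instance] Classical.propDecidable

variable {X : Type*}

/-- The order on `X` induced by a map `p : X → ℝ`, with ties broken by an
arbitrary enumeration of `X`. -/
def indRel [Fintype X] (p : X → ℝ) (x y : X) : Prop :=
  p x < p y ∨ (p x = p y ∧ Fintype.equivFin X x < Fintype.equivFin X y)

lemma indRel_mono [Fintype X] (p : X → ℝ) {a b : X} (h : indRel p a b) : p a ≤ p b := by
  rcases h with h | ⟨h, -⟩
  · exact h.le
  · exact h.le

lemma indRel_sto [Fintype X] (p : X → ℝ) : IsStrictTotalOrder X (indRel p) := by
  refine { trichotomous := ?_, irrefl := ?_, trans := ?_ }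
  · intro a b hab hba
    rcases lt_trichotomy (p a) (p b) with h | h | h
    · exact (hab (Or.inl h)).elim
    · rcases lt_trichotomy (Fintype.equivFin X a) (Fintype.equivFin X b) with h' | h' | h'
      · exact (hab (Or.inr ⟨h, h'⟩)).elim
      · exact (Fintype.equivFin X).injective h'
      · exact (hba (Or.inr ⟨h.symm, h'⟩)).elim
    · exact (hba (Or.inl h)).elim
  · intro a h
    rcases h with h | ⟨-, h⟩
    · exact lt_irrefl _ h
    · exact lt_irrefl _ h
  · intro a b c hab hbc
    rcases hab with h1 | ⟨e1, f1⟩ <;> rcases hbc with h2 | ⟨e2, f2⟩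
    · exact Or.inl (h1.trans h2)
    · exact Or.inl (h1.trans_eq e2)
    · exact Or.inl (e1.trans_lt h2)
    · exact Or.inr ⟨e1.trans e2, f1.trans f2⟩

lemma sum_mem_Icc [Fintype X] {q : X → ℝ} (hq : IsProbDist q) (s : Finset X) :
    0 ≤ ∑ y ∈ s, q y ∧ ∑ y ∈ s, q y ≤ 1 := by
  constructor
  · exact Finset.sum_nonneg fun i _ => (hq.1 i).1
  · rw [← hq.2]
    exact Finset.sum_le_sum_of_subset_of_nonneg (Finset.subset_univ s) fun i _ _ => (hq.1 i).1

/-- Existence of a maximal and a minimal element for a finite strict total order. -/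
lemma exists_min_max [Fintype X] {R : X → X → Prop} (h : IsStrictTotalOrder X R)
    (S : Set X) (hS : S.Nonempty) :
    (∃ m ∈ S, ∀ y ∈ S, ¬ R y m) ∧ (∃ m ∈ S, ∀ y ∈ S, ¬ R m y) := by
  haveI := h
  constructor
  · exact (Finite.wellFounded_of_trans_of_irrefl R).has_min S hS
  · haveI : IsTrans X (Function.swap R) := ⟨fun a b c h1 h2 => h.trans _ _ _ h2 h1⟩
    haveI : IsIrrefl X (Function.swap R) := ⟨fun a => h.irrefl a⟩
    exact (Finite.wellFounded_of_trans_of_irrefl (Function.swap R)).has_min S hS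

/-- transformation of a probability interval `(l, u)` into an
outer-approximating cloud, à la Masson–Denoeux.  A strict total order `R` on
`X` is compatible with the interval if `u x < l y` implies `R x y`, and
feasible if moreover some `p` in the credal set `PL` is non-decreasing along
`R`.  Define `π x` as the largest, over feasible orders `R`, of the maximal
cumulated mass `∑_{y ⪯ x} p y` over non-decreasing `p ∈ PL`, and `δ x` as the
smallest, over feasible orders `R`, of the minimal cumulated mass
`∑_{y ≺ x} p y`.  Then a feasible order exists, `(δ, π)` is a cloud, and its
credal set outer-approximates `PL`. -/
theorem probability_interval_to_cloud [Fintype X] (l u : X → ℝ)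
    (hlu : ∀ x, 0 ≤ l x ∧ l x ≤ u x ∧ u x ≤ 1)
    (PL : Set (X → ℝ))
    (hPL : PL = {p | IsProbDist p ∧ ∀ x, l x ≤ p x ∧ p x ≤ u x})
    (hne : PL.Nonempty)
    (Feasible : (X → X → Prop) → Prop)
    (hFeasible : ∀ R, Feasible R ↔
      (IsStrictTotalOrder X R ∧ (∀ x y, u x < l y → R x y) ∧
        ∃ p ∈ PL, ∀ x y, R x y → p x ≤ p y))
    (π δ : X → ℝ)
    (hπ : ∀ x, π x = sSup {t | ∃ R, Feasible R ∧
      t = sSup {s | ∃ p ∈ PL, (∀ a b, R a b → p a ≤ p b) ∧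
        s = ∑ y ∈ univ.filter (fun y => R y x ∨ y = x), p y}})
    (hδ : ∀ x, δ x = sInf {t | ∃ R, Feasible R ∧
      t = sInf {s | ∃ p ∈ PL, (∀ a b, R a b → p a ≤ p b) ∧
        s = ∑ y ∈ univ.filter (fun y => R y x), p y}}) :
    (∃ R, Feasible R) ∧ IsCloud δ π ∧ PL ⊆ credalCloud δ π := by
  classical
  have hmem : ∀ p ∈ PL, IsProbDist p ∧ ∀ x, l x ≤ p x ∧ p x ≤ u x := by
    intro p hp; rw [hPL] at hp; exact hp
  obtain ⟨p₀, hp₀⟩ := hne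
  have h0 := hmem p₀ hp₀
  -- feasibility of the induced order
  have hfeas : ∀ p ∈ PL, Feasible (indRel p) := by
    intro p hp
    obtain ⟨hpd, hbnd⟩ := hmem p hp
    rw [hFeasible]
    refine ⟨indRel_sto p, fun x y hxy => Or.inl ?_, p, hp, fun a b hab => indRel_mono p hab⟩
    exact lt_of_le_of_lt (hbnd x).2 (lt_of_lt_of_le hxy (hbnd y).1)
  -- key inequalities
  have hπ_ge : ∀ (x : X) (R : X → X → Prop), Feasible R → ∀ q ∈ PL,
      (∀ a b, R a b → q a ≤ q b) →
      (∑ y ∈ univ.filter (fun y => R y x ∨ y = x), q y) ≤ π x := by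
    intro x R hR q hq hmono
    rw [hπ x]
    have h1 : (∑ y ∈ univ.filter (fun y => R y x ∨ y = x), q y) ≤
        sSup {s | ∃ p ∈ PL, (∀ a b, R a b → p a ≤ p b) ∧
          s = ∑ y ∈ univ.filter (fun y => R y x ∨ y = x), p y} := by
      refine le_csSup ⟨1, fun s hs => ?_⟩ ⟨q, hq, hmono, rfl⟩
      obtain ⟨p, hp, -, rfl⟩ := hs
      exact (sum_mem_Icc (hmem p hp).1 _).2
    refine h1.trans (le_csSup ⟨1, fun t ht => ?_⟩ ⟨R, hR, rfl⟩)
    obtain ⟨R', hR', rfl⟩ := ht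
    refine Real.sSup_le (fun s hs => ?_) zero_le_one
    obtain ⟨p, hp, -, rfl⟩ := hs
    exact (sum_mem_Icc (hmem p hp).1 _).2
  have hδ_le : ∀ (x : X) (R : X → X → Prop), Feasible R → ∀ q ∈ PL,
      (∀ a b, R a b → q a ≤ q b) →
      δ x ≤ ∑ y ∈ univ.filter (fun y => R y x), q y := by
    intro x R hR q hq hmono
    rw [hδ x]
    have h1 : sInf {s | ∃ p ∈ PL, (∀ a b, R a b → p a ≤ p b) ∧
          s = ∑ y ∈ univ.filter (fun y => R y x), p y} ≤
        ∑ y ∈ univ.filter (fun y => R y x), q y := by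
      refine csInf_le ⟨0, fun s hs => ?_⟩ ⟨q, hq, hmono, rfl⟩
      obtain ⟨p, hp, -, rfl⟩ := hs
      exact (sum_mem_Icc (hmem p hp).1 _).1
    refine le_trans (csInf_le ⟨0, fun t ht => ?_⟩ ⟨R, hR, rfl⟩) h1
    obtain ⟨R', hR', rfl⟩ := ht
    refine Real.sInf_nonneg (fun s hs => ?_)
    obtain ⟨p, hp, -, rfl⟩ := hs
    exact (sum_mem_Icc (hmem p hp).1 _).1
  have hπ_le1 : ∀ x, π x ≤ 1 := by
    intro x
    rw [hπ x]
    refine Real.sSup_le (fun t ht => ?_) zero_le_one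
    obtain ⟨R', hR', rfl⟩ := ht
    refine Real.sSup_le (fun s hs => ?_) zero_le_one
    obtain ⟨p, hp, -, rfl⟩ := hs
    exact (sum_mem_Icc (hmem p hp).1 _).2
  have hδ_ge0 : ∀ x, 0 ≤ δ x := by
    intro x
    rw [hδ x]
    refine Real.sInf_nonneg (fun t ht => ?_)
    obtain ⟨R', hR', rfl⟩ := ht
    refine Real.sInf_nonneg (fun s hs => ?_)
    obtain ⟨p, hp, -, rfl⟩ := hs
    exact (sum_mem_Icc (hmem p hp).1 _).1
  -- X is nonempty
  have hX : Nonempty X := by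
    by_contra h
    haveI := not_nonempty_iff.mp h
    have h1 := h0.1.2
    rw [Finset.univ_eq_empty, Finset.sum_empty] at h1
    norm_num at h1
  have hR₀ : Feasible (indRel p₀) := hfeas p₀ hp₀
  have hsto₀ : IsStrictTotalOrder X (indRel p₀) := indRel_sto p₀
  refine ⟨⟨indRel p₀, hR₀⟩, ⟨hδ_ge0, hπ_le1, ?_, ?_, ?_⟩, ?_⟩
  · -- δ ≤ π
    intro x
    refine (hδ_le x (indRel p₀) hR₀ p₀ hp₀ (fun a b hab => indRel_mono p₀ hab)).trans
      (le_trans ?_ (hπ_ge x (indRel p₀) hR₀ p₀ hp₀ (fun a b hab => indRel_mono p₀ hab)))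
    refine Finset.sum_le_sum_of_subset_of_nonneg
      (Finset.monotone_filter_right _ (fun y _ hy => Or.inl hy)) (fun i _ _ => (h0.1.1 i).1)
  · -- π reaches 1
    obtain ⟨-, m, -, hm⟩ := exists_min_max hsto₀ Set.univ (Set.univ_nonempty)
    have hfil : (univ.filter (fun y => indRel p₀ y m ∨ y = m)) = univ := by
      refine Finset.filter_eq_self.mpr (fun y _ => ?_)
      haveI := hsto₀
      rcases trichotomous_of (indRel p₀) y m with h | h | h
      · exact Or.inl h
      · exact Or.inr h
      · exact absurd h (hm y trivial)
    have h1 := hπ_ge m (indRel p₀) hR₀ p₀ hp₀ (fun a b hab => indRel_mono p₀ hab)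
    rw [hfil, h0.1.2] at h1
    exact ⟨m, le_antisymm (hπ_le1 m) h1⟩
  · -- δ reaches 0
    obtain ⟨⟨m, -, hm⟩, -⟩ := exists_min_max hsto₀ Set.univ (Set.univ_nonempty)
    have hfil : (univ.filter (fun y => indRel p₀ y m)) = ∅ := by
      refine Finset.filter_eq_empty_iff.mpr (fun y _ => hm y trivial)
    have h1 := hδ_le m (indRel p₀) hR₀ p₀ hp₀ (fun a b hab => indRel_mono p₀ hab)
    rw [hfil, Finset.sum_empty] at h1
    exact ⟨m, le_antisymm h1 (hδ_ge0 m)⟩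
  · -- PL ⊆ credalCloud δ π
    intro p hp
    obtain ⟨hpd, -⟩ := hmem p hp
    have hRp : Feasible (indRel p) := hfeas p hp
    have hstop : IsStrictTotalOrder X (indRel p) := indRel_sto p
    have hmono : ∀ a b, indRel p a b → p a ≤ p b := fun a b hab => indRel_mono p hab
    refine ⟨hpd, fun α hα0 hα1 => ⟨?_, ?_⟩⟩
    · -- upper constraint from δ
      by_cases hS : ∃ x, α ≤ δ x
      · obtain ⟨⟨m, hmS, hm⟩, -⟩ := exists_min_max hstop {x | α ≤ δ x} hS
        have h1 : α ≤ ∑ y ∈ univ.filter (fun y => indRel p y m), p y :=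
          le_trans hmS (hδ_le m (indRel p) hRp p hp hmono)
        have hsub : univ.filter (fun y => indRel p y m) ⊆
            univ \ univ.filter (fun x => α ≤ δ x) := by
          intro y hy
          rw [Finset.mem_filter] at hy
          rw [Finset.mem_sdiff, Finset.mem_filter]
          refine ⟨Finset.mem_univ y, fun hy2 => hm y hy2.2 hy.2⟩
        have h2 : (∑ y ∈ univ.filter (fun y => indRel p y m), p y) ≤
            ∑ y ∈ univ \ univ.filter (fun x => α ≤ δ x), p y :=
          Finset.sum_le_sum_of_subset_of_nonneg hsub (fun i _ _ => (hpd.1 i).1)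
        have h3 : (∑ y ∈ univ \ univ.filter (fun x => α ≤ δ x), p y) =
            1 - ∑ x ∈ univ.filter (fun x => α ≤ δ x), p x := by
          rw [Finset.sum_sdiff_eq_sub (Finset.subset_univ _), hpd.2]
        have h4 := (h1.trans h2)
        rw [h3] at h4
        linarith
      · push_neg at hS
        have : univ.filter (fun x => α ≤ δ x) = ∅ :=
          Finset.filter_eq_empty_iff.mpr (fun x _ => not_le.mpr (hS x))
        rw [this, Finset.sum_empty]
        linarith
    · -- lower constraint from π
      by_cases hT : ∃ x, ¬ α < π x
      · obtain ⟨-, m, hmT, hm⟩ := exists_min_max hstop {x | ¬ α < π x} hT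
        have h1 : (∑ y ∈ univ.filter (fun y => indRel p y m ∨ y = m), p y) ≤ α :=
          le_trans (hπ_ge m (indRel p) hRp p hp hmono) (not_lt.mp hmT)
        have hsub : univ \ univ.filter (fun x => α < π x) ⊆
            univ.filter (fun y => indRel p y m ∨ y = m) := by
          intro y hy
          rw [Finset.mem_sdiff, Finset.mem_filter] at hy
          rw [Finset.mem_filter]
          have hyT : y ∈ {x : X | ¬ α < π x} := fun h => hy.2 ⟨Finset.mem_univ y, h⟩
          refine ⟨Finset.mem_univ y, ?_⟩
          haveI := hstop
          rcases trichotomous_of (indRel p) y m with h | h | h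
          · exact Or.inl h
          · exact Or.inr h
          · exact absurd h (hm y hyT)
        have h2 : (∑ y ∈ univ \ univ.filter (fun x => α < π x), p y) ≤
            ∑ y ∈ univ.filter (fun y => indRel p y m ∨ y = m), p y :=
          Finset.sum_le_sum_of_subset_of_nonneg hsub (fun i _ _ => (hpd.1 i).1)
        have h3 : (∑ y ∈ univ \ univ.filter (fun x => α < π x), p y) =
            1 - ∑ x ∈ univ.filter (fun x => α < π x), p x := by
          rw [Finset.sum_sdiff_eq_sub (Finset.subset_univ _), hpd.2]
        have h4 := h2.trans h1
        rw [h3] at h4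
        linarith
      · push_neg at hT
        have : univ.filter (fun x => α < π x) = univ :=
          Finset.filter_eq_self.mpr (fun x _ => hT x)
        rw [this, hpd.2]
        linarith
end

section
/- Let (δ, π) be a cloud on ℝ with δ and π continuous. If a Borel probability measure P on ℝ satisfies P(A) ≥ λ*({α ∈ (0,1] : E_α ⊆ A}) for every Borel set A ⊆ ℝ, where E_α = {r ∈ ℝ : π(r) ≥ α and δ(r) < α} and λ* is Lebesgue outer measure, then P belongs to 𝒫[δ,π]. In other words, the continuous random set with uniform mass density on α ∈ (0,1] and focal sets E_α defines a credal set that inner-approximates the credal set of the cloud. -/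
open MeasureTheory

/-- let `(δ, π)` be a cloud on `ℝ` with continuous distributions.
Any Borel probability measure `P` dominating the belief function of the
continuous random set with uniform mass density on `α ∈ (0,1]` and focal sets
`E_α = {r | π r ≥ α ∧ δ r < α}` (i.e. `P A ≥ λ*{α ∈ (0,1] | E_α ⊆ A}` for all
Borel `A`, where `λ*` is Lebesgue outer measure) belongs to the credal set of
the cloud. -/
theorem continuous_cloud_random_set_inner_approx (δ π : ℝ → ℝ)
    (hδc : Continuous δ) (hπc : Continuous π)
    (hδ0 : ∀ r, 0 ≤ δ r) (hπ1 : ∀ r, π r ≤ 1) (hle : ∀ r, δ r ≤ π r)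
    (h1 : ∃ r, π r = 1) (h0 : ∃ r, δ r = 0)
    (P : Measure ℝ) [IsProbabilityMeasure P]
    (hP : ∀ A : Set ℝ, MeasurableSet A →
      volume {α : ℝ | α ∈ Set.Ioc (0 : ℝ) 1 ∧ {r : ℝ | α ≤ π r ∧ δ r < α} ⊆ A} ≤ P A) :
    ∀ α : ℝ, 0 ≤ α → α ≤ 1 →
      P {r : ℝ | α ≤ δ r} ≤ ENNReal.ofReal (1 - α) ∧
      ENNReal.ofReal (1 - α) ≤ P {r : ℝ | α < π r} := by
  intro α hα0 hα1
  constructor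
  · have hAm : MeasurableSet {r : ℝ | δ r < α} :=
      (isOpen_lt hδc continuous_const).measurableSet
    have hP' := hP _ hAm
    have hsub : Set.Ioc (0:ℝ) α ⊆
        {β : ℝ | β ∈ Set.Ioc (0:ℝ) 1 ∧
          {r : ℝ | β ≤ π r ∧ δ r < β} ⊆ {r : ℝ | δ r < α}} := by
      intro β hβ
      exact ⟨⟨hβ.1, hβ.2.trans hα1⟩, fun r hr => lt_of_lt_of_le hr.2 hβ.2⟩
    have hvol : ENNReal.ofReal α ≤ P {r : ℝ | δ r < α} := by
      calc ENNReal.ofReal α = volume (Set.Ioc (0:ℝ) α) := by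
            simp [Real.volume_Ioc]
        _ ≤ _ := measure_mono hsub
        _ ≤ _ := hP'
    have hcompl : {r : ℝ | α ≤ δ r} = {r : ℝ | δ r < α}ᶜ := by
      ext r; simp [not_lt]
    rw [hcompl, measure_compl hAm (measure_ne_top P _), measure_univ]
    calc (1 : ENNReal) - P {r : ℝ | δ r < α} ≤ 1 - ENNReal.ofReal α :=
          tsub_le_tsub_left hvol 1
      _ = ENNReal.ofReal (1 - α) := by
          rw [← ENNReal.ofReal_one, ← ENNReal.ofReal_sub _ hα0]
  · have hAm : MeasurableSet {r : ℝ | α < π r} :=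
      (isOpen_lt continuous_const hπc).measurableSet
    have hsub : Set.Ioc α 1 ⊆
        {β : ℝ | β ∈ Set.Ioc (0:ℝ) 1 ∧
          {r : ℝ | β ≤ π r ∧ δ r < β} ⊆ {r : ℝ | α < π r}} := by
      intro β hβ
      exact ⟨⟨lt_of_le_of_lt hα0 hβ.1, hβ.2⟩, fun r hr => lt_of_lt_of_le hβ.1 hr.1⟩
    calc ENNReal.ofReal (1 - α) = volume (Set.Ioc α 1) := by
          simp [Real.volume_Ioc]
      _ ≤ _ := measure_mono hsub
      _ ≤ _ := hP _ hAm
end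

section
/- Let a < b be real numbers and let F̲, F̄ : [a,b] → [0,1] be continuous, strictly increasing functions with F̲ ≤ F̄ pointwise, F̲(a) = F̄(a) = 0 and F̲(b) = F̄(b) = 1 (a continuous p-box). For α ∈ [0,1] let x(α) = F̄⁻¹(α) and y(α) = F̲⁻¹(α), so that E_α = [x(α), y(α)] is a closed interval. Then for every Borel probability measure P on [a,b], the following are equivalent: (i) F̲(r) ≤ P([a,r]) ≤ F̄(r) for every r ∈ [a,b]; (ii) P(A) ≥ λ*({α ∈ [0,1] : [x(α), y(α)] ⊆ A}) for every Borel set A ⊆ [a,b], where λ* is Lebesgue outer measure on [0,1]. That is, the credal set of the p-box equals the credal set of the continuous random set with uniform mass density and focal sets E_α. -/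
open MeasureTheory

open ProbabilityTheory in
/-- a continuous p-box `(F̲, F̄)` on `[a, b]`, with both
cumulative functions continuous and strictly increasing from `0` to `1`, has
the same credal set as the continuous random set with uniform mass density on
`α ∈ [0,1]` and focal sets `E_α = [x α, y α]`, where `x α = F̄⁻¹ α` and
`y α = F̲⁻¹ α`: a Borel probability measure `P` supported on `[a, b]` satisfies
`F̲ r ≤ P [a, r] ≤ F̄ r` for all `r ∈ [a, b]` iff
`P A ≥ λ*{α ∈ [0,1] | [x α, y α] ⊆ A}` for every Borel `A ⊆ [a, b]`. -/
theorem continuous_pbox_eq_random_set (a b : ℝ) (hab : a < b)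
    (Flow Fbar : ℝ → ℝ)
    (hFlc : ContinuousOn Flow (Set.Icc a b)) (hFbc : ContinuousOn Fbar (Set.Icc a b))
    (hFlm : StrictMonoOn Flow (Set.Icc a b)) (hFbm : StrictMonoOn Fbar (Set.Icc a b))
    (hle : ∀ r ∈ Set.Icc a b, Flow r ≤ Fbar r)
    (hFla : Flow a = 0) (hFba : Fbar a = 0) (hFlb : Flow b = 1) (hFbb : Fbar b = 1)
    (x y : ℝ → ℝ)
    (hx : ∀ α ∈ Set.Icc (0 : ℝ) 1, x α ∈ Set.Icc a b ∧ Fbar (x α) = α)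
    (hy : ∀ α ∈ Set.Icc (0 : ℝ) 1, y α ∈ Set.Icc a b ∧ Flow (y α) = α)
    (P : Measure ℝ) [IsProbabilityMeasure P] (hsupp : P (Set.Icc a b) = 1) :
    (∀ r ∈ Set.Icc a b,
        ENNReal.ofReal (Flow r) ≤ P (Set.Icc a r) ∧
        P (Set.Icc a r) ≤ ENNReal.ofReal (Fbar r)) ↔
      (∀ A : Set ℝ, MeasurableSet A → A ⊆ Set.Icc a b →
        volume {α : ℝ | α ∈ Set.Icc (0 : ℝ) 1 ∧ Set.Icc (x α) (y α) ⊆ A} ≤ P A) := by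
  have ha : a ∈ Set.Icc a b := ⟨le_rfl, hab.le⟩
  have hb : b ∈ Set.Icc a b := ⟨hab.le, le_rfl⟩
  -- basic measure facts
  have hcompl : P (Set.Icc a b)ᶜ = 0 := by
    rw [prob_compl_eq_zero_iff measurableSet_Icc]; exact hsupp
  have hIio : P (Set.Iio a) = 0 := by
    refine measure_mono_null ?_ hcompl
    intro t ht
    simp only [Set.mem_compl_iff, Set.mem_Icc, not_and]
    intro h; exact absurd h (not_le.2 ht)
  have hIic_eq : ∀ r, a ≤ r → P (Set.Iic r) = P (Set.Icc a r) := by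
    intro r hr
    refine le_antisymm ?_ (measure_mono Set.Icc_subset_Iic_self)
    calc P (Set.Iic r) ≤ P (Set.Iio a ∪ Set.Icc a r) := by
          refine measure_mono fun t ht => ?_
          rcases lt_or_ge t a with h | h
          · exact Or.inl h
          · exact Or.inr ⟨h, ht⟩
    _ ≤ P (Set.Iio a) + P (Set.Icc a r) := measure_union_le _ _
    _ = P (Set.Icc a r) := by rw [hIio, zero_add]
  have hIic_b : P (Set.Iic b) = 1 := by rw [hIic_eq b hab.le, hsupp]
  -- cdf facts
  have hc_mono : Monotone (cdf P) := monotone_cdf P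
  have hc0 : ∀ t, t < a → cdf P t = 0 := by
    intro t ht
    rw [cdf_eq_real, measureReal_def]
    have : P (Set.Iic t) = 0 :=
      measure_mono_null (fun s hs => lt_of_le_of_lt hs ht) hIio
    simp [this]
  have hc1 : cdf P b = 1 := by rw [cdf_eq_real, measureReal_def, hIic_b]; simp
  -- the quantile function τ
  set S : ℝ → Set ℝ := fun α => {t | min α 1 ≤ cdf P t} ∩ Set.Ici a with hS_def
  set τ : ℝ → ℝ := fun α => sInf (S α) with hτ_def
  have hSb : ∀ α, b ∈ S α := fun α => ⟨by simp [hc1], hab.le⟩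
  have hSbdd : ∀ α, BddBelow (S α) := fun α => ⟨a, fun t ht => ht.2⟩
  have hτ_mono : Monotone τ := by
    intro α β h
    refine csInf_le_csInf (hSbdd α) ⟨b, hSb β⟩ fun t ht => ⟨le_trans (min_le_min h le_rfl) ht.1, ht.2⟩
  have hτm : Measurable τ := hτ_mono.measurable
  have ha_le_τ : ∀ α, a ≤ τ α := fun α => le_csInf ⟨b, hSb α⟩ fun t ht => ht.2
  have hτ_le : ∀ {α t : ℝ}, α ≤ 1 → a ≤ t → α ≤ cdf P t → τ α ≤ t := by
    intro α t hα1 hat hαc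
    exact csInf_le (hSbdd α) ⟨by rwa [min_eq_left hα1], hat⟩
  have hle_c : ∀ {α t : ℝ}, α ≤ 1 → τ α ≤ t → α ≤ cdf P t := by
    intro α t hα1 hτt
    have key : ∀ s ∈ Set.Ioi t, α ≤ cdf P s := by
      intro s hs
      obtain ⟨u, hu, hus⟩ := exists_lt_of_csInf_lt ⟨b, hSb α⟩ (lt_of_le_of_lt hτt hs)
      calc α = min α 1 := (min_eq_left hα1).symm
      _ ≤ cdf P u := hu.1
      _ ≤ cdf P s := hc_mono hus.le
    have htd : Filter.Tendsto (cdf P) (nhdsWithin t (Set.Ioi t)) (nhds (cdf P t)) :=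
      ((cdf P).right_continuous t).mono_left (nhdsWithin_mono t Set.Ioi_subset_Ici_self)
    refine ge_of_tendsto htd ?_
    filter_upwards [self_mem_nhdsWithin] with s hs using key s hs
  -- preimage of Iic under τ
  have hpre : ∀ t, τ ⁻¹' (Set.Iic t) ∩ Set.Ioc 0 1 = Set.Ioc 0 (cdf P t) := by
    intro t
    ext α
    simp only [Set.mem_inter_iff, Set.mem_preimage, Set.mem_Iic, Set.mem_Ioc]
    constructor
    · rintro ⟨hτt, hα0, hα1⟩
      exact ⟨hα0, hle_c hα1 hτt⟩
    · rintro ⟨hα0, hαc⟩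
      have hα1 : α ≤ 1 := hαc.trans (cdf_le_one P t)
      have hat : a ≤ t := by
        by_contra h
        push_neg at h
        rw [hc0 t h] at hαc
        linarith
      exact ⟨hτ_le hα1 hat hαc, hα0, hα1⟩
  -- the push-forward of the uniform measure under τ is P
  haveI hres : IsProbabilityMeasure (volume.restrict (Set.Ioc (0:ℝ) 1)) := by
    constructor
    rw [Measure.restrict_apply_univ, Real.volume_Ioc]
    norm_num
  haveI hμprob : IsProbabilityMeasure ((volume.restrict (Set.Ioc (0:ℝ) 1)).map τ) :=
    Measure.isProbabilityMeasure_map hτm.aemeasurable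
  have hμP : (volume.restrict (Set.Ioc (0:ℝ) 1)).map τ = P := by
    refine Measure.ext_of_Iic _ _ fun t => ?_
    rw [Measure.map_apply hτm measurableSet_Iic, Measure.restrict_apply (hτm measurableSet_Iic),
      hpre t, Real.volume_Ioc, sub_zero, ofReal_cdf]
  constructor
  · -- hard direction
    intro H A hA hAsub
    have hcl : ∀ r ∈ Set.Icc a b, Flow r ≤ cdf P r ∧ cdf P r ≤ Fbar r := by
      intro r hr
      obtain ⟨h1, h2⟩ := H r hr
      rw [cdf_eq_real, measureReal_def, hIic_eq r hr.1]
      constructor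
      · exact (ENNReal.ofReal_le_iff_le_toReal (measure_ne_top P _)).1 h1
      · have h0 : 0 ≤ Fbar r := hFba ▸ hFbm.monotoneOn ha hr hr.1
        calc (P (Set.Icc a r)).toReal ≤ (ENNReal.ofReal (Fbar r)).toReal :=
              ENNReal.toReal_mono ENNReal.ofReal_ne_top h2
        _ = Fbar r := ENNReal.toReal_ofReal h0
    have hTsub : {α : ℝ | α ∈ Set.Icc (0:ℝ) 1 ∧ Set.Icc (x α) (y α) ⊆ A} ⊆
        (τ ⁻¹' A ∩ Set.Ioc 0 1) ∪ ({0} ∪ Set.range (fun q : ℚ => cdf P q)) := by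
      intro α hα
      rcases eq_or_lt_of_le hα.1.1 with h0 | h0
      · exact Or.inr (Or.inl (by simp [← h0]))
      have hα1 := hα.1.2
      obtain ⟨hxI, hxv⟩ := hx α hα.1
      obtain ⟨hyI, hyv⟩ := hy α hα.1
      have hτy : τ α ≤ y α := hτ_le hα1 hyI.1 (hyv.symm.trans_le (hcl _ hyI).1)
      rcases le_or_gt (x α) (τ α) with hcase | hcase
      · exact Or.inl ⟨hα.2 ⟨hcase, hτy⟩, h0, hα1⟩
      · obtain ⟨q, hq1, hq2⟩ := exists_rat_btwn hcase
        refine Or.inr (Or.inr ⟨q, ?_⟩)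
        have h1 : cdf P q ≤ α := by
          calc cdf P q ≤ cdf P (x α) := hc_mono hq2.le
          _ ≤ Fbar (x α) := (hcl _ hxI).2
          _ = α := hxv
        have h2 : α ≤ cdf P q := by
          obtain ⟨u, hu, huq⟩ := exists_lt_of_csInf_lt ⟨b, hSb α⟩ hq1
          calc α = min α 1 := (min_eq_left hα1).symm
          _ ≤ cdf P u := hu.1
          _ ≤ cdf P q := hc_mono huq.le
        exact le_antisymm h1 h2
    calc volume {α : ℝ | α ∈ Set.Icc (0:ℝ) 1 ∧ Set.Icc (x α) (y α) ⊆ A}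
        ≤ volume ((τ ⁻¹' A ∩ Set.Ioc 0 1) ∪ ({0} ∪ Set.range (fun q : ℚ => cdf P q))) :=
          measure_mono hTsub
    _ ≤ volume (τ ⁻¹' A ∩ Set.Ioc 0 1) + volume ({0} ∪ Set.range (fun q : ℚ => cdf P q)) :=
          measure_union_le _ _
    _ = volume (τ ⁻¹' A ∩ Set.Ioc 0 1) := by
          rw [((Set.countable_singleton 0).union (Set.countable_range _)).measure_zero volume,
            add_zero]
    _ = ((volume.restrict (Set.Ioc (0:ℝ) 1)).map τ) A := by
          rw [Measure.map_apply hτm hA, Measure.restrict_apply (hτm hA)]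
    _ = P A := by rw [hμP]
  · -- easy direction
    intro H r hr
    have hFl01 : Flow r ∈ Set.Icc (0:ℝ) 1 :=
      ⟨hFla ▸ hFlm.monotoneOn ha hr hr.1, hFlb ▸ hFlm.monotoneOn hr hb hr.2⟩
    have hFb01 : Fbar r ∈ Set.Icc (0:ℝ) 1 :=
      ⟨hFba ▸ hFbm.monotoneOn ha hr hr.1, hFbb ▸ hFbm.monotoneOn hr hb hr.2⟩
    constructor
    · have h := H (Set.Icc a r) measurableSet_Icc (Set.Icc_subset_Icc le_rfl hr.2)
      refine le_trans ?_ h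
      rw [show ENNReal.ofReal (Flow r) = volume (Set.Icc (0:ℝ) (Flow r)) by
        rw [Real.volume_Icc, sub_zero]]
      refine measure_mono fun α hα => ?_
      have hα01 : α ∈ Set.Icc (0:ℝ) 1 := ⟨hα.1, hα.2.trans hFl01.2⟩
      obtain ⟨hxI, hxv⟩ := hx α hα01
      obtain ⟨hyI, hyv⟩ := hy α hα01
      have hyr : y α ≤ r := by
        by_contra hcon
        push_neg at hcon
        have h2 := hFlm hr hyI hcon
        rw [hyv] at h2
        linarith [hα.2]
      exact ⟨hα01, fun t ht => ⟨hxI.1.trans ht.1, ht.2.trans hyr⟩⟩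
    · have hIocsub : Set.Ioc r b ⊆ Set.Icc a b := fun t ht => ⟨hr.1.trans ht.1.le, ht.2⟩
      have h := H (Set.Ioc r b) measurableSet_Ioc hIocsub
      have hge : ENNReal.ofReal (1 - Fbar r) ≤ P (Set.Ioc r b) := by
        refine le_trans ?_ h
        rw [show ENNReal.ofReal (1 - Fbar r) = volume (Set.Ioc (Fbar r) 1) by
          rw [Real.volume_Ioc]]
        refine measure_mono fun α hα => ?_
        have hα01 : α ∈ Set.Icc (0:ℝ) 1 := ⟨hFb01.1.trans hα.1.le, hα.2⟩
        obtain ⟨hxI, hxv⟩ := hx α hα01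
        obtain ⟨hyI, hyv⟩ := hy α hα01
        have hrx : r < x α := by
          by_contra hcon
          push_neg at hcon
          have h2 := hFbm.monotoneOn hxI hr hcon
          rw [hxv] at h2
          linarith [hα.1]
        exact ⟨hα01, fun t ht => ⟨hrx.trans_le ht.1, ht.2.trans hyI.2⟩⟩
      have hdisj : Disjoint (Set.Icc a r) (Set.Ioc r b) :=
        Set.disjoint_left.2 fun t ht ht' => absurd ht'.1 (not_lt.2 ht.2)
      have hsum : P (Set.Icc a r) + P (Set.Ioc r b) = 1 := by
        rw [← measure_union hdisj measurableSet_Ioc, Set.Icc_union_Ioc_eq_Icc hr.1 hr.2, hsupp]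
      have h1 : ENNReal.ofReal (1 - Fbar r) = 1 - ENNReal.ofReal (Fbar r) := by
        rw [ENNReal.ofReal_sub _ hFb01.1, ENNReal.ofReal_one]
      have hF1 : ENNReal.ofReal (Fbar r) ≤ 1 := by
        rw [← ENNReal.ofReal_one]
        exact ENNReal.ofReal_le_ofReal hFb01.2
      have key : P (Set.Icc a r) ≤ 1 - (1 - ENNReal.ofReal (Fbar r)) := by
        refine ENNReal.le_sub_of_add_le_right (ENNReal.sub_ne_top ENNReal.one_ne_top) ?_
        calc P (Set.Icc a r) + (1 - ENNReal.ofReal (Fbar r))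
            ≤ P (Set.Icc a r) + P (Set.Ioc r b) := add_le_add (le_refl _) (by rw [← h1]; exact hge)
        _ = 1 := hsum
      rwa [ENNReal.sub_sub_cancel ENNReal.one_ne_top hF1] at key
end

section
/- Let π : ℝ → [0,1] be a continuous function with π(m) = 1 for some m ∈ ℝ and π(c) = 0 for some c ∈ ℝ, so that (π, π) is a thin cloud on ℝ. Then the credal set 𝒫[π,π] is nonempty: there exists a Borel probability measure P on ℝ such that for every α ∈ [0,1], P({r : π(r) ≥ α}) ≤ 1 − α ≤ P({r : π(r) > α}). -/
open MeasureTheory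

/-- a thin cloud `(π, π)` on `ℝ` with continuous `π` (attaining
the values `1` and `0`) has a nonempty credal set: some Borel probability
measure `P` satisfies `P {π ≥ α} ≤ 1 - α ≤ P {π > α}` for every `α ∈ [0,1]`. -/
theorem continuous_thin_cloud_nonempty (π : ℝ → ℝ) (hc : Continuous π)
    (h0 : ∀ r, 0 ≤ π r) (h1 : ∀ r, π r ≤ 1)
    (hm : ∃ m, π m = 1) (hz : ∃ z, π z = 0) :
    ∃ P : Measure ℝ, IsProbabilityMeasure P ∧
      ∀ α : ℝ, 0 ≤ α → α ≤ 1 →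
        P {r : ℝ | α ≤ π r} ≤ ENNReal.ofReal (1 - α) ∧
        ENNReal.ofReal (1 - α) ≤ P {r : ℝ | α < π r} := by
  obtain ⟨m, hm⟩ := hm
  obtain ⟨z, hz⟩ := hz
  set I : Set ℝ := Set.uIcc m z with hI
  have hIcpt : IsCompact I := isCompact_uIcc
  have hIcl : IsClosed I := hIcpt.isClosed
  have hsurj : Set.Icc (0:ℝ) 1 ⊆ π '' I := by
    have h := intermediate_value_uIcc (hc.continuousOn : ContinuousOn π I)
    have : Set.uIcc (π m) (π z) = Set.Icc (0:ℝ) 1 := by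
      rw [hm, hz, Set.uIcc_comm, Set.uIcc_of_le (by norm_num : (0:ℝ) ≤ 1)]
    rwa [this] at h
  -- the "inverse" on [0,1]
  set g : ℝ → ℝ := fun t => sInf (I ∩ π ⁻¹' {t}) with hg
  have hgmem : ∀ t ∈ Set.Icc (0:ℝ) 1, g t ∈ I ∩ π ⁻¹' {t} := by
    intro t ht
    obtain ⟨x, hxI, hxt⟩ := hsurj ht
    have hne : (I ∩ π ⁻¹' {t}).Nonempty := ⟨x, hxI, hxt⟩
    have hcl : IsClosed (I ∩ π ⁻¹' {t}) :=
      hIcl.inter (isClosed_singleton.preimage hc)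
    have hbdd : BddBelow (I ∩ π ⁻¹' {t}) :=
      hIcpt.bddBelow.mono Set.inter_subset_left
    exact hcl.csInf_mem hne hbdd
  -- clamped version, defined on all of ℝ
  set f : ℝ → ℝ := fun t => g (min 1 (max 0 t)) with hf
  have hclamp_mem : ∀ t : ℝ, min 1 (max 0 t) ∈ Set.Icc (0:ℝ) 1 := by
    intro t
    constructor
    · exact le_min zero_le_one (le_max_left 0 t)
    · exact min_le_left _ _
  have hclamp_id : ∀ t ∈ Set.Icc (0:ℝ) 1, min 1 (max 0 t) = t := by
    intro t ht
    rw [max_eq_right ht.1, min_eq_right ht.2]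
  have hft : ∀ t ∈ Set.Icc (0:ℝ) 1, π (f t) = t := by
    intro t ht
    have := (hgmem t ht).2
    simp only [Set.mem_preimage, Set.mem_singleton_iff] at this
    simp only [hf, hclamp_id t ht]
    exact this
  -- measurability of f
  have hclampc : Continuous fun t : ℝ => min 1 (max 0 t) :=
    continuous_const.min (continuous_const.max continuous_id)
  have hfm : Measurable f := by
    apply measurable_of_Iic
    intro c
    have hkey : f ⁻¹' Set.Iic c =
        (fun t : ℝ => min 1 (max 0 t)) ⁻¹'
          (Set.Icc (0:ℝ) 1 ∩ π '' (I ∩ Set.Iic c)) := by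
      ext t
      simp only [Set.mem_preimage, Set.mem_Iic, Set.mem_inter_iff]
      set s := min 1 (max 0 t) with hs
      have hs01 : s ∈ Set.Icc (0:ℝ) 1 := hclamp_mem t
      constructor
      · intro hgc
        refine ⟨hs01, g s, ⟨(hgmem s hs01).1, hgc⟩, ?_⟩
        have := (hgmem s hs01).2
        simpa using this
      · rintro ⟨_, x, ⟨hxI, hxc⟩, hπx⟩
        have hxmem : x ∈ I ∩ π ⁻¹' {s} := ⟨hxI, by simpa using hπx⟩
        have hbdd : BddBelow (I ∩ π ⁻¹' {s}) :=
          hIcpt.bddBelow.mono Set.inter_subset_left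
        exact le_trans (csInf_le hbdd hxmem) hxc
    rw [hkey]
    have himg : MeasurableSet (π '' (I ∩ Set.Iic c)) :=
      ((hIcpt.inter_right isClosed_Iic).image hc).measurableSet
    exact hclampc.measurable (measurableSet_Icc.inter himg)
  -- the measure
    -- P := pushforward of Lebesgue on [0,1] through f
  refine ⟨Measure.map f (volume.restrict (Set.Icc (0:ℝ) 1)), ?_, ?_⟩
  · constructor
    rw [Measure.map_apply hfm MeasurableSet.univ]
    simp [Real.volume_Icc]
  · intro α hα0 hα1
    have hms₁ : MeasurableSet {r : ℝ | α ≤ π r} :=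
      measurableSet_le measurable_const hc.measurable
    have hms₂ : MeasurableSet {r : ℝ | α < π r} :=
      measurableSet_lt measurable_const hc.measurable
    have e₁ : f ⁻¹' {r : ℝ | α ≤ π r} ∩ Set.Icc (0:ℝ) 1 = Set.Icc α 1 := by
      ext t
      simp only [Set.mem_inter_iff, Set.mem_preimage, Set.mem_setOf_eq,
        Set.mem_Icc]
      constructor
      · rintro ⟨hαt, ht⟩
        rw [hft t ht] at hαt
        exact ⟨hαt, ht.2⟩
      · rintro ⟨hαt, ht1⟩
        have ht : t ∈ Set.Icc (0:ℝ) 1 := ⟨le_trans hα0 hαt, ht1⟩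
        rw [hft t ht]
        exact ⟨hαt, ht⟩
    have e₂ : f ⁻¹' {r : ℝ | α < π r} ∩ Set.Icc (0:ℝ) 1 = Set.Ioc α 1 := by
      ext t
      simp only [Set.mem_inter_iff, Set.mem_preimage, Set.mem_setOf_eq,
        Set.mem_Ioc]
      constructor
      · rintro ⟨hαt, ht⟩
        rw [hft t ht] at hαt
        exact ⟨hαt, ht.2⟩
      · rintro ⟨hαt, ht1⟩
        have ht : t ∈ Set.Icc (0:ℝ) 1 := ⟨le_trans hα0 hαt.le, ht1⟩
        rw [hft t ht]
        exact ⟨hαt, ht⟩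
    rw [Measure.map_apply hfm hms₁, Measure.map_apply hfm hms₂,
      Measure.restrict_apply (hfm hms₁), Measure.restrict_apply (hfm hms₂),
      e₁, e₂, Real.volume_Icc, Real.volume_Ioc]
    exact ⟨le_refl _, le_refl _⟩
end

section
/- Let π : ℝ → [0,1] be continuous, with π(m) = 1 for some m ∈ ℝ, non-decreasing on (−∞, m], non-increasing on [m, ∞), and π(t) → 0 as t → ±∞ (a continuous unimodal fuzzy interval). Then F(x) = sup_{t ≤ x} π(t) is the cumulative distribution function of a Borel probability measure P on ℝ, and this P satisfies, for every α ∈ [0,1): P({t : π(t) > α}) = P({t : π(t) ≥ α}) = 1 − α. In particular P belongs to both 𝒫_π and 𝒫_{1−π}, i.e., for every α ∈ [0,1), P({t : π(t) > α}) ≥ 1 − α and P({t : π(t) ≥ α}) ≤ 1 − α. -/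
open MeasureTheory Filter

/-- let `π : ℝ → [0,1]` be a continuous unimodal fuzzy interval:
`π m = 1`, `π` non-decreasing on `(-∞, m]`, non-increasing on `[m, ∞)`, and
tending to `0` at `±∞`.  Then `F x = sup_{t ≤ x} π t` is the cumulative
distribution function of a Borel probability measure `P`, and this `P`
satisfies `P {π > α} = P {π ≥ α} = 1 - α` for every `α ∈ [0,1)`; in particular
`P` lies in both `𝒫_π` and `𝒫_{1-π}`, i.e. `P {π > α} ≥ 1 - α` and
`P {π ≥ α} ≤ 1 - α` for every `α ∈ [0,1)`. -/
theorem thin_cloud_fuzzy_interval_measure (π : ℝ → ℝ) (hc : Continuous π)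
    (h0 : ∀ t, 0 ≤ π t) (h1 : ∀ t, π t ≤ 1)
    (m : ℝ) (hm : π m = 1)
    (hmono : MonotoneOn π (Set.Iic m)) (hanti : AntitoneOn π (Set.Ici m))
    (htop : Tendsto π atTop (nhds 0)) (hbot : Tendsto π atBot (nhds 0)) :
    ∃ P : Measure ℝ, IsProbabilityMeasure P ∧
      (∀ x : ℝ, P (Set.Iic x) = ENNReal.ofReal (sSup (π '' Set.Iic x))) ∧
      (∀ α : ℝ, 0 ≤ α → α < 1 →
        P {t : ℝ | α < π t} = ENNReal.ofReal (1 - α) ∧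
        P {t : ℝ | α ≤ π t} = ENNReal.ofReal (1 - α) ∧
        ENNReal.ofReal (1 - α) ≤ P {t : ℝ | α < π t} ∧
        P {t : ℝ | α ≤ π t} ≤ ENNReal.ofReal (1 - α)) := by
  classical
  set F : ℝ → ℝ := fun x => π (min x m) with hFdef
  have hFcont : Continuous F := hc.comp (continuous_id.min continuous_const)
  have hFmono : Monotone F := fun x y hxy =>
    hmono (min_le_right x m) (min_le_right y m) (min_le_min hxy le_rfl)
  set f : StieltjesFunction ℝ :=
    ⟨F, hFmono, fun x => hFcont.continuousAt.continuousWithinAt⟩ with hfdef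
  have hfbot : Tendsto f atBot (nhds 0) := by
    apply hbot.congr'
    filter_upwards [eventually_le_atBot m] with x hx
    simp [hfdef, hFdef, min_eq_left hx]
  have hftop : Tendsto f atTop (nhds 1) := by
    apply tendsto_const_nhds.congr'
    filter_upwards [eventually_ge_atTop m] with x hx
    simp [hfdef, hFdef, min_eq_right hx, hm]
  set P : Measure ℝ := f.measure with hPdef
  have hprob : IsProbabilityMeasure P :=
    ⟨by rw [hPdef, f.measure_univ hfbot hftop]; simp⟩
  have hIic : ∀ x, P (Set.Iic x) = ENNReal.ofReal (F x) := by
    intro x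
    rw [hPdef, f.measure_Iic hfbot x]
    norm_num
    rfl
  have hleftLim : ∀ x, Function.leftLim f x = f x := fun x =>
    leftLim_eq_of_tendsto ((hFcont.tendsto x).mono_left nhdsWithin_le_nhds)
  have hsingleton : ∀ x, P {x} = 0 := by
    intro x
    rw [hPdef, f.measure_singleton, hleftLim]
    simp
  have hIio : ∀ x, P (Set.Iio x) = ENNReal.ofReal (F x) := by
    intro x
    have : Set.Iio x = Set.Iic x \ {x} := by ext t; simp [lt_iff_le_and_ne]
    rw [this, measure_diff_null (hsingleton x), hIic]
  have hFle : ∀ x, x ≤ m → F x = π x := fun x hx => by simp [hFdef, min_eq_left hx]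
  have hIoi : P (Set.Ioi m) = 0 := by
    have : Set.Ioi m = (Set.Iic m)ᶜ := by ext t; simp
    rw [this, prob_compl_eq_one_sub measurableSet_Iic, hIic, hFle m le_rfl, hm]
    simp
  have hsup : ∀ x, sSup (π '' Set.Iic x) = F x := by
    intro x
    rcases le_total x m with hxm | hmx
    · rw [hFle x hxm]
      refine IsGreatest.csSup_eq ⟨⟨x, Set.mem_Iic.2 le_rfl, rfl⟩, ?_⟩
      rintro y ⟨t, ht, rfl⟩
      exact hmono (le_trans ht hxm) hxm ht
    · have : F x = 1 := by simp [hFdef, min_eq_right hmx, hm]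
      rw [this]
      refine IsGreatest.csSup_eq ⟨⟨m, hmx, hm⟩, ?_⟩
      rintro y ⟨t, _, rfl⟩
      exact h1 t
  refine ⟨P, hprob, fun x => by rw [hIic, hsup], fun α hα0 hα1 => ?_⟩
  have hmeasLe : MeasurableSet {t : ℝ | π t ≤ α} :=
    measurableSet_le hc.measurable measurable_const
  have hmeasLt : MeasurableSet {t : ℝ | π t < α} :=
    measurableSet_lt hc.measurable measurable_const
  -- upper bound for P {π ≤ α}
  have hle : P {t : ℝ | π t ≤ α} ≤ ENNReal.ofReal α := by
    set S : Set ℝ := {t | t ≤ m ∧ π t ≤ α} with hSdef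
    have hbdd : BddAbove S := ⟨m, fun t ht => ht.1⟩
    by_cases hne : S.Nonempty
    · have hclosed : IsClosed S := by
        have : S = Set.Iic m ∩ π ⁻¹' Set.Iic α := by ext t; exact Iff.rfl
        rw [this]
        exact isClosed_Iic.inter (isClosed_Iic.preimage hc)
      set a := sSup S with hadef
      have haS : a ∈ S := hclosed.csSup_mem hne hbdd
      have hsub : {t : ℝ | π t ≤ α} ⊆ Set.Iic a ∪ Set.Ioi m := by
        intro t ht
        by_cases htm : t ≤ m
        · exact Or.inl (le_csSup hbdd ⟨htm, ht⟩)
        · exact Or.inr (lt_of_not_ge htm)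
      calc P {t : ℝ | π t ≤ α} ≤ P (Set.Iic a ∪ Set.Ioi m) := measure_mono hsub
        _ ≤ P (Set.Iic a) + P (Set.Ioi m) := measure_union_le _ _
        _ = ENNReal.ofReal (π a) := by rw [hIic, hIoi, hFle a haS.1, add_zero]
        _ ≤ ENNReal.ofReal α := ENNReal.ofReal_le_ofReal haS.2
    · have hsub : {t : ℝ | π t ≤ α} ⊆ Set.Ioi m := by
        intro t ht
        by_contra htm
        exact hne ⟨t, le_of_not_gt fun h => htm h, ht⟩
      calc P {t : ℝ | π t ≤ α} ≤ P (Set.Ioi m) := measure_mono hsub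
        _ = 0 := hIoi
        _ ≤ ENNReal.ofReal α := by simp
  -- lower bound for P {π < α}
  have hlt : ENNReal.ofReal α ≤ P {t : ℝ | π t < α} := by
    rcases eq_or_lt_of_le hα0 with h0 | hpos
    · simp [← h0]
    · set S : Set ℝ := {t | t ≤ m ∧ π t < α} with hSdef
      have hbdd : BddAbove S := ⟨m, fun t ht => ht.1⟩
      have hne : S.Nonempty := by
        have h1' : ∀ᶠ x in atBot, π x < α := hbot.eventually_lt_const hpos
        obtain ⟨t, ht1, ht2⟩ := (h1'.and (eventually_le_atBot m)).exists
        exact ⟨t, ht2, ht1⟩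
      set a := sSup S with hadef
      have ham : a ≤ m := csSup_le hne fun t ht => ht.1
      have hsub : Set.Iio a ⊆ {t : ℝ | π t < α} := by
        intro t ht
        obtain ⟨s, hs, hts⟩ := exists_lt_of_lt_csSup hne ht
        exact lt_of_le_of_lt (hmono (le_trans hts.le hs.1) hs.1 hts.le) hs.2
      have hπa : α ≤ π a := by
        by_contra h
        push_neg at h
        have halt : a < m := lt_of_le_of_ne ham (fun he => by
          rw [he, hm] at h; linarith)
        have hev : ∀ᶠ x in nhds a, π x < α ∧ x < m :=
          ((hc.tendsto a).eventually (Iio_mem_nhds h)).and (Iio_mem_nhds halt)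
        have hev' : ∀ᶠ x in nhdsWithin a (Set.Ioi a), (π x < α ∧ x < m) ∧ a < x :=
          (hev.filter_mono nhdsWithin_le_nhds).and eventually_mem_nhdsWithin
        obtain ⟨x, ⟨hx1, hx2⟩, hx3⟩ := hev'.exists
        exact absurd (le_csSup hbdd ⟨hx2.le, hx1⟩) (not_le_of_gt hx3)
      calc ENNReal.ofReal α ≤ ENNReal.ofReal (π a) := ENNReal.ofReal_le_ofReal hπa
        _ = P (Set.Iio a) := by rw [hIio, hFle a ham]
        _ ≤ P {t : ℝ | π t < α} := measure_mono hsub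
  have hltle : P {t : ℝ | π t < α} ≤ P {t : ℝ | π t ≤ α} :=
    measure_mono fun t (ht : π t < α) => le_of_lt ht
  have hPlt : P {t : ℝ | π t < α} = ENNReal.ofReal α :=
    le_antisymm (le_trans hltle hle) hlt
  have hPle : P {t : ℝ | π t ≤ α} = ENNReal.ofReal α :=
    le_antisymm hle (le_trans hlt hltle)
  have harith : (1 : ENNReal) - ENNReal.ofReal α = ENNReal.ofReal (1 - α) := by
    rw [ENNReal.ofReal_sub _ hα0, ENNReal.ofReal_one]
  have hset1 : {t : ℝ | α < π t} = {t : ℝ | π t ≤ α}ᶜ := by ext t; simp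
  have hset2 : {t : ℝ | α ≤ π t} = {t : ℝ | π t < α}ᶜ := by ext t; simp
  have hgt : P {t : ℝ | α < π t} = ENNReal.ofReal (1 - α) := by
    rw [hset1, prob_compl_eq_one_sub hmeasLe, hPle, harith]
  have hge : P {t : ℝ | α ≤ π t} = ENNReal.ofReal (1 - α) := by
    rw [hset2, prob_compl_eq_one_sub hmeasLt, hPlt, harith]
  exact ⟨hgt, hge, le_of_eq hgt.symm, le_of_eq hge⟩
end
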